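/- arXiv:1910.01633 — 7 statements merged into one kernel-verified Lean document; each statement's English description precedes it below -/
import Mathlib

section
/- Let Q be a connected quiver with vertex set V and edge set E, let k be a field, and let x : E → k be a toric representation of Q. Then x is indecomposable if and only if the graph (V, {e ∈ E : x_e ≠ 0}) is connected. -/
open Classical Finset

noncomputable section

/-- The equivalence relation on vertices generated by the edges in `D`:
`t e` and `h e` are related for every `e ∈ D`. -/
def joinedRel {V E : Type} (tl hd : E → V) (D : Set E) : V → V → Prop :=
  Relation.EqvGen fun a b => ∃ e ∈ D, (tl e = a ∧ hd e = b) ∨ (tl e = b ∧ hd e = a)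

/-- The graph `(V, D)` is connected. -/
def IsConn {V E : Type} (tl hd : E → V) (D : Set E) : Prop :=
  ∀ a b : V, joinedRel tl hd D a b

/-- `T ⊆ E` is a spanning tree: `(V, T)` is connected and `#T = #V - 1`. -/
def IsSpanningTree {V E : Type} [Fintype V] (tl hd : E → V) (T : Finset E) : Prop :=
  IsConn tl hd ↑T ∧ T.card + 1 = Fintype.card V

/-- The connected component of the vertex `v` in the graph with edge set `D`. -/
def component {V E : Type} [Fintype V] (tl hd : E → V) (D : Finset E) (v : V) : Finset V :=
  Finset.univ.filter fun j => joinedRel tl hd (↑D) v j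

/-- Genericity of a stability parameter. -/
def Generic {V : Type} [Fintype V] (θ : V → ℝ) : Prop :=
  ∀ J : Finset V, J.Nonempty → J ≠ Finset.univ → ∑ i ∈ J, θ i ≠ 0

/-- Auxiliary recursion computing the external activity: `S` is the set of remaining
edges and `C` the set of already contracted edges (an edge of the current, partially
contracted, quiver is a loop iff its endpoints are joined by edges of `C`).  At each
step the largest non-loop edge is contracted (if it lies in `T`) or deleted (otherwise);
once no non-loop edge remains (i.e. the contracted quiver has one vertex), the number of
remaining (loop) edges is returned. -/
def extactAux {V E : Type} [LinearOrder E] (tl hd : E → V) (T : Finset E)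
    (S C : Finset E) : ℕ :=
  if hne : (S.filter fun e => ¬ joinedRel tl hd (↑C) (tl e) (hd e)).Nonempty then
    if (S.filter fun e => ¬ joinedRel tl hd (↑C) (tl e) (hd e)).max' hne ∈ T then
      extactAux tl hd T
        (S.erase ((S.filter fun e => ¬ joinedRel tl hd (↑C) (tl e) (hd e)).max' hne))
        (insert ((S.filter fun e => ¬ joinedRel tl hd (↑C) (tl e) (hd e)).max' hne) C)
    else
      extactAux tl hd T
        (S.erase ((S.filter fun e => ¬ joinedRel tl hd (↑C) (tl e) (hd e)).max' hne)) C
  else S.card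
termination_by S.card
decreasing_by
  · exact Finset.card_lt_card (Finset.erase_ssubset
      (Finset.mem_of_mem_filter _ (Finset.max'_mem _ hne)))
  · exact Finset.card_lt_card (Finset.erase_ssubset
      (Finset.mem_of_mem_filter _ (Finset.max'_mem _ hne)))

/-- The external activity `extact(Q, T)` of a spanning tree `T`, with respect to a fixed
linear order on the edges. -/
def extact {V E : Type} [Fintype E] [LinearOrder E] (tl hd : E → V) (T : Finset E) : ℕ :=
  extactAux tl hd T Finset.univ ∅

/-- Isomorphism of toric representations. -/
def IsoRep {V E k : Type} [Field k] (tl hd : E → V) (x x' : E → k) : Prop :=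
  ∃ g : V → kˣ, ∀ e, x' e = (g (hd e) : k) * x e * ((g (tl e) : k))⁻¹

/-- Gauge equivalence (the `(kˣ)^V`-action) for representations of the double quiver. -/
def GaugeEquiv {V E k : Type} [Field k] (tl hd : E → V) (x xs x' xs' : E → k) : Prop :=
  ∃ g : V → kˣ,
    (∀ e, x' e = (g (hd e) : k) * x e * ((g (tl e) : k))⁻¹) ∧
    (∀ e, xs' e = (g (tl e) : k) * xs e * ((g (hd e) : k))⁻¹)

/-- The moment map equations for the parameter `lam`. -/
def MomentMap {V E k : Type} [Fintype E] [Field k] (tl hd : E → V) (lam : V → k)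
    (x xs : E → k) : Prop :=
  ∀ i : V,
    (∑ e ∈ Finset.univ.filter fun e => hd e = i, x e * xs e) -
      (∑ e ∈ Finset.univ.filter fun e => tl e = i, x e * xs e) = lam i

/-- `J` is closed for `(x, xs)`, with only the conditions for edges in `S` imposed. -/
def ClosedOn {V E k : Type} [Zero k] (tl hd : E → V) (x xs : E → k) (S : Set E)
    (J : Finset V) : Prop :=
  ∀ e ∈ S, (x e ≠ 0 → tl e ∈ J → hd e ∈ J) ∧ (xs e ≠ 0 → hd e ∈ J → tl e ∈ J)

/-- `θ`-stability of `(x, xs)` on the subquiver with vertex set `W` and edge set `S`. -/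
def StableSub {V E k : Type} [Zero k] (tl hd : E → V) (θ : V → ℝ) (x xs : E → k)
    (W : Finset V) (S : Set E) : Prop :=
  ∀ J : Finset V, J ⊆ W → ClosedOn tl hd x xs S J → J.Nonempty → J ≠ W →
    0 < ∑ i ∈ J, θ i

/-- Destabilising subsets for `(x, xs)` on the subquiver `(W, S)`. -/
def DestabSub {V E k : Type} [Zero k] (tl hd : E → V) (θ : V → ℝ) (x xs : E → k)
    (W : Finset V) (S : Set E) (J : Finset V) : Prop :=
  J ⊆ W ∧ J.Nonempty ∧ J ≠ W ∧ ClosedOn tl hd x xs S J ∧ ∑ i ∈ J, θ i ≤ 0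

/-- The projection identifying the vertex `a` with the vertex `b`, i.e. the quotient map
`V → V/e` for the contraction of an edge with tail `a` and head `b` (the quotient being
modelled on the subtype of vertices different from `a`). -/
def cProj {V : Type} (a b : V) (h : b ≠ a) (i : V) : {j : V // j ≠ a} :=
  if hi : i = a then ⟨b, h⟩ else ⟨i, hi⟩

/-- Tail map of the contracted quiver `Q/e`. -/
def contractTl {V E : Type} (tl hd : E → V) (e : E) (h : hd e ≠ tl e)
    (f : {f : E // f ≠ e}) : {j : V // j ≠ tl e} := cProj (tl e) (hd e) h (tl f.1)

/-- Head map of the contracted quiver `Q/e`. -/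
def contractHd {V E : Type} (tl hd : E → V) (e : E) (h : hd e ≠ tl e)
    (f : {f : E // f ≠ e}) : {j : V // j ≠ tl e} := cProj (tl e) (hd e) h (hd f.1)

/-- Contraction `θ/e` (or `λ/e`) of a parameter along the contraction of an edge with
tail `a` and head `b`: the new vertex `ι` (represented by `b`) gets the value
`θ a + θ b`, all other vertices keep their values. -/
def contractParam {V R : Type} [Add R] (a b : V) (θ : V → R) (j : {i : V // i ≠ a}) : R :=
  if (j : V) = b then θ a + θ b else θ (j : V)

/-- The graph of the tree-assignment recursion: `TreeAssign tl hd x xs W S θ T` means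
that the recursion, applied to the restriction of `(x, xs)` to the subquiver with vertex
set `W` and edge set `S` and with stability parameter `θ` (and the linear order induced
from `E`), produces the spanning tree `T`. -/
inductive TreeAssign {V E k : Type} [Fintype V] [LinearOrder E] [Zero k]
    (tl hd : E → V) (x xs : E → k) :
    Finset V → Finset E → (V → ℝ) → Finset E → Prop
  | base (W : Finset V) (S : Finset E) (θ : V → ℝ) (hW : W.card = 1) :
      TreeAssign tl hd x xs W S θ ∅
  | delete (W : Finset V) (S : Finset E) (θ : V → ℝ) (e : E)
      (he : e ∈ S) (hloop : tl e ≠ hd e)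
      (hsmall : ∀ f ∈ S, tl f ≠ hd f → e ≤ f)
      (hstab : StableSub tl hd θ x xs W ↑(S.erase e))
      (T : Finset E) (ih : TreeAssign tl hd x xs W (S.erase e) θ T) :
      TreeAssign tl hd x xs W S θ T
  | contract (W : Finset V) (S : Finset E) (θ : V → ℝ) (e : E) (a b : V)
      (he : e ∈ S) (hloop : tl e ≠ hd e)
      (hsmall : ∀ f ∈ S, tl f ≠ hd f → e ≤ f)
      (hab : (a = tl e ∧ b = hd e) ∨ (a = hd e ∧ b = tl e))
      (J₁ : Finset V)
      (hJ₁ : DestabSub tl hd θ x xs W ↑(S.erase e) J₁)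
      (hall : ∀ J, DestabSub tl hd θ x xs W ↑(S.erase e) J → a ∈ J ∧ b ∉ J)
      (hmin : ∀ J, DestabSub tl hd θ x xs W ↑(S.erase e) J →
        ∑ i ∈ J₁, θ i ≤ ∑ i ∈ J, θ i)
      (T₁ T₂ : Finset E)
      (ih₁ : TreeAssign tl hd x xs J₁ (S.filter fun f => tl f ∈ J₁ ∧ hd f ∈ J₁)
          (fun i => if i = a then θ i - ∑ j ∈ J₁, θ j
            else if i = b then θ i + ∑ j ∈ J₁, θ j else θ i) T₁)
      (ih₂ : TreeAssign tl hd x xs (W \ J₁)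
          (S.filter fun f => tl f ∈ W \ J₁ ∧ hd f ∈ W \ J₁)
          (fun i => if i = a then θ i - ∑ j ∈ J₁, θ j
            else if i = b then θ i + ∑ j ∈ J₁, θ j else θ i) T₂) :
      TreeAssign tl hd x xs W S θ (insert e (T₁ ∪ T₂))

/-- Points of the cell `M_T`: `θ`-stable pairs satisfying the moment map equations whose
assigned spanning tree is `T`. -/
def CellPt {V E k : Type} [Fintype V] [Fintype E] [LinearOrder E] [Field k]
    (tl hd : E → V) (lam : V → k) (θ : V → ℝ) (T : Finset E) : Type :=
  {p : (E → k) × (E → k) //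
    StableSub tl hd θ p.1 p.2 Finset.univ Set.univ ∧
    MomentMap tl hd lam p.1 p.2 ∧
    TreeAssign tl hd p.1 p.2 Finset.univ Finset.univ θ T}

/-- The cell `M_T` of the Nakajima orbit set: `(kˣ)^V`-orbits of points. -/
def Cell {V E k : Type} [Fintype V] [Fintype E] [LinearOrder E] [Field k]
    (tl hd : E → V) (lam : V → k) (θ : V → ℝ) (T : Finset E) : Type :=
  Quot fun p q : CellPt tl hd lam θ T => GaugeEquiv tl hd p.1.1 p.1.2 q.1.1 q.1.2



/-- A submodule of `k` over a field `k` containing a nonzero element is `⊤`. -/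
lemma sub_eq_top_of_mem {k : Type} [Field k] (U : Submodule k k) {c : k}
    (hc : c ∈ U) (hc0 : c ≠ 0) : U = ⊤ :=
  Ideal.eq_top_of_isUnit_mem U hc (isUnit_iff_ne_zero.mpr hc0)

attribute [-instance] ValuationRing.instLinearOrderIdealOfDecidableLE

/-- a toric representation of a connected quiver is indecomposable iff its
inversion graph `(V, {e | x e ≠ 0})` is connected. -/
theorem statement0 {V E : Type} [Fintype V] [Nonempty V] [Fintype E]
    (tl hd : E → V) (hQ : IsConn tl hd Set.univ)
    (k : Type) [Field k] (x : E → k) :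
    (¬ ∃ U W : V → Submodule k k,
        (∀ i, IsCompl (U i) (W i)) ∧
        (∀ e, ∀ u ∈ U (tl e), x e * u ∈ U (hd e)) ∧
        (∀ e, ∀ w ∈ W (tl e), x e * w ∈ W (hd e)) ∧
        (∃ i, U i ≠ ⊥) ∧ (∃ j, W j ≠ ⊥)) ↔
      IsConn tl hd {e | x e ≠ 0} := by
  constructor
  · intro hnd a b
    by_contra hab
    apply hnd
    refine ⟨fun i => if joinedRel tl hd {e | x e ≠ 0} a i then ⊤ else ⊥,
            fun i => if joinedRel tl hd {e | x e ≠ 0} a i then ⊥ else ⊤, ?_, ?_, ?_, ?_, ?_⟩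
    · intro i
      by_cases h : joinedRel tl hd {e | x e ≠ 0} a i <;>
        simp [h, isCompl_top_bot, isCompl_bot_top]
    · intro e u hu
      by_cases hx : x e = 0
      · simp [hx, Submodule.zero_mem]
      · have hj : joinedRel tl hd {e | x e ≠ 0} (tl e) (hd e) :=
          Relation.EqvGen.rel _ _ ⟨e, hx, Or.inl ⟨rfl, rfl⟩⟩
        by_cases h : joinedRel tl hd {e | x e ≠ 0} a (tl e)
        · have h2 : joinedRel tl hd {e | x e ≠ 0} a (hd e) := Relation.EqvGen.trans _ _ _ h hj
          simp [h, h2]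
        · beta_reduce at hu ⊢
          rw [if_neg h] at hu
          rw [Submodule.mem_bot] at hu
          subst hu
          split <;> simp
    · intro e u hu
      by_cases hx : x e = 0
      · simp [hx, Submodule.zero_mem]
      · have hj : joinedRel tl hd {e | x e ≠ 0} (tl e) (hd e) :=
          Relation.EqvGen.rel _ _ ⟨e, hx, Or.inl ⟨rfl, rfl⟩⟩
        by_cases h : joinedRel tl hd {e | x e ≠ 0} a (tl e)
        · beta_reduce at hu ⊢
          rw [if_pos h] at hu
          rw [Submodule.mem_bot] at hu
          subst hu
          split <;> simp
        · have h2 : ¬ joinedRel tl hd {e | x e ≠ 0} a (hd e) := fun h2 =>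
            h (Relation.EqvGen.trans _ _ _ h2 (Relation.EqvGen.symm _ _ hj))
          simp [h, h2]
    · refine ⟨a, ?_⟩
      have : joinedRel tl hd {e | x e ≠ 0} a a := Relation.EqvGen.refl a
      simp [this]
    · refine ⟨b, ?_⟩
      simp [hab]
  · rintro hconn ⟨U, W, hcompl, hU, hW, ⟨i, hi⟩, ⟨j, hj⟩⟩
    have step : ∀ e : E, x e ≠ 0 → (U (tl e) = ⊤ ↔ U (hd e) = ⊤) := by
      intro e hx
      constructor
      · intro h
        have hm : x e ∈ U (hd e) := by
          have := hU e 1 (by rw [h]; trivial)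
          simpa using this
        exact sub_eq_top_of_mem _ hm hx
      · intro h
        rcases Ideal.eq_bot_or_top (U (tl e)) with h' | h'
        · exfalso
          have hw : W (tl e) = ⊤ := by
            have := (hcompl (tl e)).codisjoint
            rw [h'] at this
            simpa [codisjoint_bot] using this
          have hm : x e ∈ W (hd e) := by
            have := hW e 1 (by rw [hw]; trivial)
            simpa using this
          have hwhd : W (hd e) = ⊤ := sub_eq_top_of_mem _ hm hx
          have hd2 := (hcompl (hd e)).disjoint
          rw [h, hwhd, disjoint_top] at hd2
          exact bot_ne_top.symm hd2
        · exact h'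
    have key : ∀ a b : V, joinedRel tl hd {e | x e ≠ 0} a b → (U a = ⊤ ↔ U b = ⊤) := by
      intro a b hab
      induction hab with
      | rel a b h =>
        obtain ⟨e, he, h⟩ := h
        rcases h with ⟨h1, h2⟩ | ⟨h1, h2⟩
        · rw [← h1, ← h2]; exact step e he
        · rw [← h1, ← h2]; exact (step e he).symm
      | refl a => exact Iff.rfl
      | symm a b _ ih => exact ih.symm
      | trans a b c _ _ ih1 ih2 => exact ih1.trans ih2
    have hit : U i = ⊤ := (Ideal.eq_bot_or_top (U i)).resolve_left hi
    have hwj : W j = ⊤ := by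
      rcases Ideal.eq_bot_or_top (W j) with h | h
      · exact absurd h hj
      · exact h
    have hjb : U j = ⊥ := by
      have hd2 := (hcompl j).disjoint
      rw [hwj, disjoint_top] at hd2
      exact hd2
    have := (key i j (hconn i j)).mp hit
    rw [hjb] at this
    exact bot_ne_top this


end
end

section
/- Let Q be a connected quiver with a linear order on its edge set E, and let q be a prime power. The number of isomorphism classes of indecomposable toric representations of Q over the finite field F_q equals the sum over all spanning trees T of Q of q^{extact(Q,T)}. -/
set_option linter.unusedSectionVars false
set_option linter.unusedVariables false
set_option maxHeartbeats 1000000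


open Classical Finset

noncomputable section

section Graph

variable {V E : Type} [Fintype V] [DecidableEq E] (tl hd : E → V)

lemma joinedRel_mono {C D : Set E} (h : C ⊆ D) {v w : V}
    (hj : joinedRel tl hd C v w) : joinedRel tl hd D v w :=
  Relation.EqvGen.mono (fun a b ⟨e, he, hor⟩ => ⟨e, h he, hor⟩) _ _ hj

lemma joinedRel_of_mem {D : Set E} {e : E} (he : e ∈ D) :
    joinedRel tl hd D (tl e) (hd e) :=
  Relation.EqvGen.rel _ _ ⟨e, he, Or.inl ⟨rfl, rfl⟩⟩

lemma coe_subset_insert (e : E) (C : Finset E) :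
    (↑C : Set E) ⊆ ↑(insert e C) := by
  intro f hf
  simp only [Finset.coe_insert, Set.mem_insert_iff]
  exact Or.inr hf

lemma joinedRel_refl (D : Set E) (v : V) : joinedRel tl hd D v v :=
  Relation.EqvGen.refl v

lemma joinedRel_symm {D : Set E} {v w : V} (h : joinedRel tl hd D v w) :
    joinedRel tl hd D w v := Relation.EqvGen.symm _ _ h

lemma joinedRel_trans {D : Set E} {u v w : V} (h : joinedRel tl hd D u v)
    (h' : joinedRel tl hd D v w) : joinedRel tl hd D u w :=
  Relation.EqvGen.trans _ _ _ h h'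

/-- If all edges of `A` connect already `C`-joined vertices, then `A` is absorbed. -/
lemma joinedRel_absorb {A C : Finset E}
    (hA : ∀ e ∈ A, joinedRel tl hd (↑C) (tl e) (hd e)) {v w : V}
    (h : joinedRel tl hd ↑(A ∪ C) v w) : joinedRel tl hd (↑C) v w := by
  induction h with
  | rel a b hab =>
    obtain ⟨e, he, hor⟩ := hab
    rw [Finset.mem_coe, Finset.mem_union] at he
    rcases he with he | he
    · have h' := hA e he
      rcases hor with ⟨h1, h2⟩ | ⟨h1, h2⟩
      · rwa [h1, h2] at h'
      · rw [h1, h2] at h'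
        exact joinedRel_symm tl hd h'
    · exact Relation.EqvGen.rel _ _ ⟨e, Finset.mem_coe.mpr he, hor⟩
  | refl x => exact Relation.EqvGen.refl x
  | symm x y _ ih => exact joinedRel_symm tl hd ih
  | trans x y z _ _ ih1 ih2 => exact joinedRel_trans tl hd ih1 ih2

lemma mem_component {D : Finset E} {v w : V} :
    w ∈ component tl hd D v ↔ joinedRel tl hd (↑D) v w := by
  simp [component]

lemma component_eq_iff {D : Finset E} {v w : V} :
    component tl hd D v = component tl hd D w ↔ joinedRel tl hd (↑D) v w := by
  constructor
  · intro h
    have : w ∈ component tl hd D w := (mem_component tl hd).mpr (joinedRel_refl tl hd _ w)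
    rw [← h] at this
    exact (mem_component tl hd).mp this
  · intro h
    ext u
    rw [mem_component, mem_component]
    exact ⟨fun h' => joinedRel_trans tl hd (joinedRel_symm tl hd h) h',
      fun h' => joinedRel_trans tl hd h h'⟩

/-- Number of connected components of `(V, D)`. -/
def ncomp (D : Finset E) : ℕ := (Finset.univ.image (component tl hd D)).card

lemma joinedRel_empty {v w : V} (h : joinedRel tl hd (↑(∅ : Finset E)) v w) : v = w := by
  induction h with
  | rel a b hab => obtain ⟨e, he, _⟩ := hab; simp at he
  | refl x => rfl
  | symm x y _ ih => exact ih.symm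
  | trans x y z _ _ ih1 ih2 => exact ih1.trans ih2

lemma ncomp_empty : ncomp tl hd (∅ : Finset E) = Fintype.card V := by
  have hcomp : ∀ v : V, component tl hd (∅ : Finset E) v = {v} := by
    intro v
    ext w
    rw [mem_component, Finset.mem_singleton]
    exact ⟨fun h => (joinedRel_empty tl hd h).symm,
      fun h => by rw [h]; exact joinedRel_refl tl hd _ v⟩
  unfold ncomp
  rw [Finset.image_congr (fun v _ => hcomp v)]
  rw [Finset.card_image_of_injective _ (fun a b h => Finset.singleton_injective h)]
  exact Finset.card_univ

lemma joinedRel_insert_cases {C : Finset E} {e : E} {v w : V}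
    (h : joinedRel tl hd ↑(insert e C) v w) :
    joinedRel tl hd (↑C) v w ∨
    (joinedRel tl hd (↑C) v (tl e) ∧ joinedRel tl hd (↑C) (hd e) w) ∨
    (joinedRel tl hd (↑C) v (hd e) ∧ joinedRel tl hd (↑C) (tl e) w) := by
  induction h with
  | rel a b hab =>
    obtain ⟨f, hf, hor⟩ := hab
    rw [Finset.mem_coe, Finset.mem_insert] at hf
    rcases hf with rfl | hf
    · rcases hor with ⟨h1, h2⟩ | ⟨h1, h2⟩
      · exact Or.inr (Or.inl ⟨h1 ▸ Relation.EqvGen.refl _, h2 ▸ Relation.EqvGen.refl _⟩)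
      · exact Or.inr (Or.inr ⟨h2 ▸ Relation.EqvGen.refl _, h1 ▸ Relation.EqvGen.refl _⟩)
    · exact Or.inl (Relation.EqvGen.rel _ _ ⟨f, Finset.mem_coe.mpr hf, hor⟩)
  | refl x => exact Or.inl (Relation.EqvGen.refl x)
  | symm x y _ ih =>
    rcases ih with h | ⟨h1, h2⟩ | ⟨h1, h2⟩
    · exact Or.inl (joinedRel_symm tl hd h)
    · exact Or.inr (Or.inr ⟨joinedRel_symm tl hd h2, joinedRel_symm tl hd h1⟩)
    · exact Or.inr (Or.inl ⟨joinedRel_symm tl hd h2, joinedRel_symm tl hd h1⟩)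
  | trans x y z _ _ ih1 ih2 =>
    rcases ih1 with h | ⟨h1, h2⟩ | ⟨h1, h2⟩ <;>
      rcases ih2 with h' | ⟨h1', h2'⟩ | ⟨h1', h2'⟩
    · exact Or.inl (joinedRel_trans tl hd h h')
    · exact Or.inr (Or.inl ⟨joinedRel_trans tl hd h h1', h2'⟩)
    · exact Or.inr (Or.inr ⟨joinedRel_trans tl hd h h1', h2'⟩)
    · exact Or.inr (Or.inl ⟨h1, joinedRel_trans tl hd h2 h'⟩)
    · exact Or.inr (Or.inl ⟨h1, h2'⟩)
    · exact Or.inl (joinedRel_trans tl hd h1 h2')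
    · exact Or.inr (Or.inr ⟨h1, joinedRel_trans tl hd h2 h'⟩)
    · exact Or.inl (joinedRel_trans tl hd h1 h2')
    · exact Or.inr (Or.inr ⟨h1, h2'⟩)

lemma joinedRel_insert_iff {C : Finset E} {e : E} {v w : V} :
    joinedRel tl hd ↑(insert e C) v w ↔
    (joinedRel tl hd (↑C) v w ∨
    (joinedRel tl hd (↑C) v (tl e) ∧ joinedRel tl hd (↑C) (hd e) w) ∨
    (joinedRel tl hd (↑C) v (hd e) ∧ joinedRel tl hd (↑C) (tl e) w)) := by
  constructor
  · exact joinedRel_insert_cases tl hd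
  · have hsub : (↑C : Set E) ⊆ ↑(insert e C) := coe_subset_insert e C
    have hedge : joinedRel tl hd ↑(insert e C) (tl e) (hd e) :=
      joinedRel_of_mem tl hd (show e ∈ (↑(insert e C) : Set E) by simp)
    rintro (h | ⟨h1, h2⟩ | ⟨h1, h2⟩)
    · exact joinedRel_mono tl hd hsub h
    · exact joinedRel_trans tl hd (joinedRel_mono tl hd hsub h1)
        (joinedRel_trans tl hd hedge (joinedRel_mono tl hd hsub h2))
    · exact joinedRel_trans tl hd (joinedRel_mono tl hd hsub h1)
        (joinedRel_trans tl hd (joinedRel_symm tl hd hedge)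
          (joinedRel_mono tl hd hsub h2))

lemma ncomp_insert {C : Finset E} {e : E}
    (h : ¬ joinedRel tl hd (↑C) (tl e) (hd e)) :
    ncomp tl hd (insert e C) + 1 = ncomp tl hd C := by
  set a := tl e with ha
  set b := hd e with hb
  set F := component tl hd C with hF
  set F' := component tl hd (insert e C) with hF'
  set S₀ : Finset V := Finset.univ.filter
    (fun v => ¬ joinedRel tl hd (↑C) a v ∧ ¬ joinedRel tl hd (↑C) b v) with hS₀
  have hmemS₀ : ∀ v : V, v ∈ S₀ ↔
      (¬ joinedRel tl hd (↑C) a v ∧ ¬ joinedRel tl hd (↑C) b v) := by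
    intro v; simp [hS₀]
  have c2 : ∀ v ∈ S₀, F' v = F v := by
    intro v hv
    rw [hmemS₀] at hv
    ext w
    rw [hF, hF', mem_component, mem_component, joinedRel_insert_iff]
    constructor
    · rintro (h' | ⟨h1, h2⟩ | ⟨h1, h2⟩)
      · exact h'
      · exact absurd (joinedRel_symm tl hd h1) hv.1
      · exact absurd (joinedRel_symm tl hd h1) hv.2
    · exact Or.inl
  have hFeq : ∀ v w : V, F v = F w ↔ joinedRel tl hd (↑C) v w := fun v w =>
    component_eq_iff tl hd
  have hF'eq : ∀ v w : V, F' v = F' w ↔ joinedRel tl hd ↑(insert e C) v w := fun v w =>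
    component_eq_iff tl hd
  have c3 : Finset.univ.image F = insert (F a) (insert (F b) (S₀.image F)) := by
    ext X
    simp only [Finset.mem_image, Finset.mem_insert, Finset.mem_univ, true_and]
    constructor
    · rintro ⟨v, rfl⟩
      by_cases h1 : joinedRel tl hd (↑C) a v
      · exact Or.inl ((hFeq a v).mpr h1).symm
      by_cases h2 : joinedRel tl hd (↑C) b v
      · exact Or.inr (Or.inl ((hFeq b v).mpr h2).symm)
      · exact Or.inr (Or.inr ⟨v, (hmemS₀ v).mpr ⟨h1, h2⟩, rfl⟩)
    · rintro (rfl | rfl | ⟨v, _, rfl⟩)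
      · exact ⟨a, rfl⟩
      · exact ⟨b, rfl⟩
      · exact ⟨v, rfl⟩
  have c4 : Finset.univ.image F' = insert (F' a) (S₀.image F) := by
    ext X
    simp only [Finset.mem_image, Finset.mem_insert, Finset.mem_univ, true_and]
    constructor
    · rintro ⟨v, rfl⟩
      by_cases h1 : joinedRel tl hd (↑C) a v
      · exact Or.inl ((hF'eq a v).mpr (joinedRel_mono tl hd
          (coe_subset_insert e C) h1)).symm
      by_cases h2 : joinedRel tl hd (↑C) b v
      · refine Or.inl ((hF'eq a v).mpr ?_).symm
        refine joinedRel_trans tl hd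
          (joinedRel_of_mem tl hd (show e ∈ (↑(insert e C) : Set E) by simp)) ?_
        exact joinedRel_mono tl hd (coe_subset_insert e C) h2
      · refine Or.inr ⟨v, (hmemS₀ v).mpr ⟨h1, h2⟩, ?_⟩
        exact (c2 v ((hmemS₀ v).mpr ⟨h1, h2⟩)).symm
    · rintro (rfl | ⟨v, hv, rfl⟩)
      · exact ⟨a, rfl⟩
      · exact ⟨v, (c2 v hv)⟩
  have haS₀ : ∀ v ∈ S₀, a ∉ F v := by
    intro v hv hav
    rw [hmemS₀] at hv
    exact hv.1 (joinedRel_symm tl hd ((mem_component tl hd).mp hav))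
  have hFa : F a ∉ S₀.image F := by
    rw [Finset.mem_image]
    rintro ⟨v, hv, hveq⟩
    exact haS₀ v hv (hveq ▸ (mem_component tl hd).mpr (joinedRel_refl tl hd _ a))
  have hFb : F b ∉ S₀.image F := by
    rw [Finset.mem_image]
    rintro ⟨v, hv, hveq⟩
    rw [hmemS₀] at hv
    have : b ∈ F v := hveq ▸ (mem_component tl hd).mpr (joinedRel_refl tl hd _ b)
    exact hv.2 (joinedRel_symm tl hd ((mem_component tl hd).mp this))
  have hFab : F a ≠ F b := fun hh => h ((hFeq a b).mp hh)
  have hF'a : F' a ∉ S₀.image F := by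
    rw [Finset.mem_image]
    rintro ⟨v, hv, hveq⟩
    have : a ∈ F' a := (mem_component tl hd).mpr (joinedRel_refl tl hd _ a)
    rw [← hveq] at this
    exact haS₀ v hv this
  have e1 : ncomp tl hd C = (S₀.image F).card + 2 := by
    unfold ncomp
    rw [← hF, c3, Finset.card_insert_of_notMem (by
      simp only [Finset.mem_insert]
      rintro (h' | h')
      exacts [hFab h', hFa h']), Finset.card_insert_of_notMem hFb]
  have e2 : ncomp tl hd (insert e C) = (S₀.image F).card + 1 := by
    unfold ncomp
    rw [← hF', c4, Finset.card_insert_of_notMem hF'a]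
  omega

lemma joinedRel_insert_of_joined {C : Finset E} {e : E}
    (h : joinedRel tl hd (↑C) (tl e) (hd e)) {v w : V} :
    joinedRel tl hd ↑(insert e C) v w ↔ joinedRel tl hd (↑C) v w := by
  constructor
  · intro h'
    rcases joinedRel_insert_cases tl hd h' with h'' | ⟨h1, h2⟩ | ⟨h1, h2⟩
    · exact h''
    · exact joinedRel_trans tl hd h1 (joinedRel_trans tl hd h h2)
    · exact joinedRel_trans tl hd h1 (joinedRel_trans tl hd (joinedRel_symm tl hd h) h2)
  · exact joinedRel_mono tl hd (coe_subset_insert e C)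

lemma ncomp_le (C : Finset E) : Fintype.card V ≤ ncomp tl hd C + C.card := by
  induction C using Finset.induction with
  | empty => rw [ncomp_empty]; simp
  | insert _ _ hx ih =>
    rename_i e C
    rw [Finset.card_insert_of_notMem hx]
    by_cases h : joinedRel tl hd (↑C) (tl e) (hd e)
    · have : ncomp tl hd (insert e C) = ncomp tl hd C := by
        unfold ncomp
        congr 1
        apply Finset.image_congr
        intro v _
        ext w
        rw [mem_component, mem_component]
        exact joinedRel_insert_of_joined tl hd h
      omega
    · have := ncomp_insert tl hd h
      omega

lemma ncomp_eq_one_of_isConn [Nonempty V] {C : Finset E} (h : IsConn tl hd ↑C) :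
    ncomp tl hd C = 1 := by
  have hcomp : ∀ v : V, component tl hd C v = Finset.univ := by
    intro v; ext w
    simp only [Finset.mem_univ, iff_true, mem_component]
    exact h v w
  unfold ncomp
  rw [Finset.image_congr (fun v _ => hcomp v)]
  rw [Finset.image_const Finset.univ_nonempty]
  exact Finset.card_singleton _

lemma card_le_of_isConn [Nonempty V] {C : Finset E} (h : IsConn tl hd ↑C) :
    Fintype.card V ≤ C.card + 1 := by
  have := ncomp_le tl hd C
  rw [ncomp_eq_one_of_isConn tl hd h] at this
  omega

end Graph

section Key

variable {V E : Type} [Fintype V] [Nonempty V] [LinearOrder E] (tl hd : E → V)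

lemma extactAux_base {T S C : Finset E}
    (hne : ¬ (S.filter fun e => ¬ joinedRel tl hd (↑C) (tl e) (hd e)).Nonempty) :
    extactAux tl hd T S C = S.card := by
  rw [extactAux, dif_neg hne]

lemma extactAux_step {S C : Finset E}
    (hne : (S.filter fun e => ¬ joinedRel tl hd (↑C) (tl e) (hd e)).Nonempty)
    (T : Finset E) :
    extactAux tl hd T S C =
      if (S.filter fun e => ¬ joinedRel tl hd (↑C) (tl e) (hd e)).max' hne ∈ T then
        extactAux tl hd T
          (S.erase ((S.filter fun e => ¬ joinedRel tl hd (↑C) (tl e) (hd e)).max' hne))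
          (insert ((S.filter fun e => ¬ joinedRel tl hd (↑C) (tl e) (hd e)).max' hne) C)
      else
        extactAux tl hd T
          (S.erase ((S.filter fun e => ¬ joinedRel tl hd (↑C) (tl e) (hd e)).max' hne)) C := by
  rw [extactAux, dif_pos hne]

lemma extactAux_congr (S C T T' : Finset E) (h : ∀ f ∈ S, (f ∈ T ↔ f ∈ T')) :
    extactAux tl hd T S C = extactAux tl hd T' S C := by
  by_cases hne : (S.filter fun e => ¬ joinedRel tl hd (↑C) (tl e) (hd e)).Nonempty
  · rw [extactAux_step tl hd hne T, extactAux_step tl hd hne T']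
    set e := (S.filter fun e => ¬ joinedRel tl hd (↑C) (tl e) (hd e)).max' hne with he
    have heS : e ∈ S := Finset.mem_of_mem_filter _ (Finset.max'_mem _ hne)
    have hiff := h e heS
    have hrec1 := extactAux_congr (S.erase e) (insert e C) T T'
      (fun f hf => h f (Finset.mem_of_mem_erase hf))
    have hrec2 := extactAux_congr (S.erase e) C T T'
      (fun f hf => h f (Finset.mem_of_mem_erase hf))
    by_cases het : e ∈ T
    · rw [if_pos het, if_pos (hiff.mp het), hrec1]
    · rw [if_neg het, if_neg (fun hc => het (hiff.mpr hc)), hrec2]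
  · rw [extactAux_base tl hd hne, extactAux_base tl hd hne]
termination_by S.card
decreasing_by
  · exact Finset.card_lt_card (Finset.erase_ssubset heS)
  · exact Finset.card_lt_card (Finset.erase_ssubset heS)

lemma sum_pow_card (s : Finset E) (x : ℕ) :
    ∑ t ∈ s.powerset, x ^ t.card = (x + 1) ^ s.card := by
  induction s using Finset.induction with
  | empty => simp
  | insert _ _ hx ih =>
    rename_i a s
    rw [Finset.sum_powerset_insert hx]
    have h2 : ∑ t ∈ s.powerset, x ^ (insert a t).card = x * ∑ t ∈ s.powerset, x ^ t.card := by
      rw [Finset.mul_sum]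
      refine Finset.sum_congr rfl fun t ht => ?_
      rw [Finset.card_insert_of_notMem (fun hc => hx (Finset.mem_powerset.mp ht hc)),
        pow_succ]
      ring
    rw [h2, ih, Finset.card_insert_of_notMem hx, pow_succ]
    ring

/-- The key deletion-contraction induction. -/
lemma key (q : ℕ) (hq : 1 ≤ q) (S C : Finset E) (hdisj : Disjoint S C)
    (hinv : ncomp tl hd C + C.card = Fintype.card V) :
    (∑ D ∈ S.powerset, if IsConn tl hd ↑(D ∪ C) then
        (q - 1) ^ (D.card + C.card + 1 - Fintype.card V) else 0)
    = ∑ T ∈ S.powerset, if IsConn tl hd ↑(T ∪ C) ∧ T.card + C.card + 1 = Fintype.card V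
        then q ^ extactAux tl hd T S C else 0 := by
  by_cases hne : (S.filter fun e => ¬ joinedRel tl hd (↑C) (tl e) (hd e)).Nonempty
  · -- inductive step
    set e := (S.filter fun e => ¬ joinedRel tl hd (↑C) (tl e) (hd e)).max' hne with he
    have heS : e ∈ S := Finset.mem_of_mem_filter _ (Finset.max'_mem _ hne)
    have henl : ¬ joinedRel tl hd (↑C) (tl e) (hd e) :=
      (Finset.mem_filter.mp (Finset.max'_mem _ hne)).2
    have heC : e ∉ C := fun hc => (Finset.disjoint_left.mp hdisj heS) hc
    -- first rewrite the extactAux inside the right-hand sum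
    have hstep : (∑ T ∈ S.powerset, if IsConn tl hd ↑(T ∪ C) ∧
          T.card + C.card + 1 = Fintype.card V
          then q ^ extactAux tl hd T S C else 0)
        = ∑ T ∈ S.powerset, if IsConn tl hd ↑(T ∪ C) ∧
          T.card + C.card + 1 = Fintype.card V
          then (if e ∈ T then q ^ extactAux tl hd T (S.erase e) (insert e C)
            else q ^ extactAux tl hd T (S.erase e) C) else 0 := by
      refine Finset.sum_congr rfl fun T hT => ?_
      rw [extactAux_step tl hd hne T, ← he]
      by_cases het : e ∈ T
      · rw [if_pos het, if_pos het]
      · rw [if_neg het, if_neg het]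
    rw [hstep]
    clear hstep
    obtain ⟨S', hS'⟩ : ∃ S', S.erase e = S' := ⟨S.erase e, rfl⟩
    have heS' : e ∉ S' := hS' ▸ Finset.notMem_erase e S
    have hS : insert e S' = S := hS' ▸ Finset.insert_erase heS
    have hdisj' : Disjoint S' C := by
      rw [← hS']
      exact Finset.disjoint_of_subset_left (Finset.erase_subset e S) hdisj
    have hdisj'' : Disjoint S' (insert e C) := by
      rw [Finset.disjoint_insert_right]
      exact ⟨heS', hdisj'⟩
    have hinv' : ncomp tl hd (insert e C) + (insert e C).card = Fintype.card V := by
      rw [Finset.card_insert_of_notMem heC]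
      have h2 := ncomp_insert tl hd henl
      omega
    have IH1 := key q hq S' C hdisj' hinv
    have IH2 := key q hq S' (insert e C) hdisj'' hinv'
    rw [hS'] at *
    rw [← hS, Finset.sum_powerset_insert heS', Finset.sum_powerset_insert heS']
    have hL2 : (∑ D ∈ S'.powerset, if IsConn tl hd ↑(insert e D ∪ C) then
        (q - 1) ^ ((insert e D).card + C.card + 1 - Fintype.card V) else 0)
        = ∑ D ∈ S'.powerset, if IsConn tl hd ↑(D ∪ insert e C) then
            (q - 1) ^ (D.card + (insert e C).card + 1 - Fintype.card V) else 0 := by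
      refine Finset.sum_congr rfl fun D hD => ?_
      have heD : e ∉ D := fun hc => heS' (Finset.mem_powerset.mp hD hc)
      have hu : insert e D ∪ C = D ∪ insert e C := by
        rw [Finset.insert_union, Finset.union_insert]
      have hcard : (insert e D).card + C.card + 1 - Fintype.card V
          = D.card + (insert e C).card + 1 - Fintype.card V := by
        rw [Finset.card_insert_of_notMem heD, Finset.card_insert_of_notMem heC]
        omega
      rw [hu, hcard]
    have hR1 : (∑ T ∈ S'.powerset, if IsConn tl hd ↑(T ∪ C) ∧
          T.card + C.card + 1 = Fintype.card V
          then (if e ∈ T then q ^ extactAux tl hd T S' (insert e C)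
            else q ^ extactAux tl hd T S' C) else 0)
        = ∑ T ∈ S'.powerset, if IsConn tl hd ↑(T ∪ C) ∧
            T.card + C.card + 1 = Fintype.card V
            then q ^ extactAux tl hd T S' C else 0 := by
      refine Finset.sum_congr rfl fun T hT => ?_
      have heT : e ∉ T := fun hc => heS' (Finset.mem_powerset.mp hT hc)
      rw [if_neg heT]
    have hR2 : (∑ T ∈ S'.powerset, if IsConn tl hd ↑(insert e T ∪ C) ∧
          (insert e T).card + C.card + 1 = Fintype.card V
          then (if e ∈ insert e T then q ^ extactAux tl hd (insert e T) S' (insert e C)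
            else q ^ extactAux tl hd (insert e T) S' C) else 0)
        = ∑ T ∈ S'.powerset, if IsConn tl hd ↑(T ∪ insert e C) ∧
            T.card + (insert e C).card + 1 = Fintype.card V
            then q ^ extactAux tl hd T S' (insert e C) else 0 := by
      refine Finset.sum_congr rfl fun T hT => ?_
      have heT : e ∉ T := fun hc => heS' (Finset.mem_powerset.mp hT hc)
      have hu : insert e T ∪ C = T ∪ insert e C := by
        rw [Finset.insert_union, Finset.union_insert]
      have hcard : (insert e T).card = T.card + 1 := Finset.card_insert_of_notMem heT
      have hcard' : (insert e C).card = C.card + 1 := Finset.card_insert_of_notMem heC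
      have hx : extactAux tl hd (insert e T) S' (insert e C)
          = extactAux tl hd T S' (insert e C) := by
        refine extactAux_congr tl hd S' (insert e C) (insert e T) T (fun f hf => ?_)
        have hfe : f ≠ e := fun hc => heS' (hc ▸ hf)
        simp [Finset.mem_insert, hfe]
      rw [if_pos (Finset.mem_insert_self e T), hu, hx]
      by_cases hc : IsConn tl hd ↑(T ∪ insert e C)
      · have hiff : ((insert e T).card + C.card + 1 = Fintype.card V)
            ↔ (T.card + (insert e C).card + 1 = Fintype.card V) := by
          rw [hcard, hcard']
          omega
        by_cases hc2 : T.card + (insert e C).card + 1 = Fintype.card V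
        · rw [if_pos ⟨hc, hiff.mpr hc2⟩, if_pos ⟨hc, hc2⟩]
        · rw [if_neg (fun hh => hc2 (hiff.mp hh.2)), if_neg (fun hh => hc2 hh.2)]
      · rw [if_neg (fun hh => hc hh.1), if_neg (fun hh => hc hh.1)]
    rw [hL2, hR1, hR2, IH1, IH2]
  · -- base case
    have hall : ∀ f ∈ S, joinedRel tl hd (↑C) (tl f) (hd f) := by
      rw [Finset.not_nonempty_iff_eq_empty, Finset.filter_eq_empty_iff] at hne
      intro f hf
      by_contra hc
      exact hne hf hc
    have habs : ∀ D : Finset E, D ⊆ S →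
        (IsConn tl hd ↑(D ∪ C) ↔ IsConn tl hd (↑C)) := by
      intro D hD
      constructor
      · intro hconn v w
        exact joinedRel_absorb tl hd (fun f hf => hall f (hD hf)) (hconn v w)
      · intro hconn v w
        exact joinedRel_mono tl hd (by
          intro f hf
          rw [Finset.mem_coe] at hf ⊢
          exact Finset.mem_union_right D hf) (hconn v w)
    by_cases hconn : IsConn tl hd (↑C)
    · have hC1 : C.card + 1 = Fintype.card V := by
        have := ncomp_eq_one_of_isConn tl hd hconn
        omega
      have hLHS : (∑ D ∈ S.powerset, if IsConn tl hd ↑(D ∪ C) then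
          (q - 1) ^ (D.card + C.card + 1 - Fintype.card V) else 0)
          = ∑ D ∈ S.powerset, (q - 1) ^ D.card := by
        refine Finset.sum_congr rfl fun D hD => ?_
        rw [if_pos ((habs D (Finset.mem_powerset.mp hD)).mpr hconn)]
        have hexp : D.card + C.card + 1 - Fintype.card V = D.card := by omega
        rw [hexp]
      have hRHS : (∑ T ∈ S.powerset, if IsConn tl hd ↑(T ∪ C) ∧
            T.card + C.card + 1 = Fintype.card V
            then q ^ extactAux tl hd T S C else 0)
          = ∑ T ∈ S.powerset, if T = (∅ : Finset E) then q ^ S.card else 0 := by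
        refine Finset.sum_congr rfl fun T hT => ?_
        by_cases hTe : T = (∅ : Finset E)
        · subst hTe
          rw [if_pos ⟨(habs ∅ (Finset.empty_subset S)).mpr hconn, by simpa using hC1⟩,
            if_pos rfl, extactAux_base tl hd hne]
        · rw [if_neg hTe, if_neg]
          rintro ⟨-, hcard⟩
          exact hTe (Finset.card_eq_zero.mp (by omega))
      rw [hLHS, hRHS, sum_pow_card, Finset.sum_ite_eq' S.powerset ∅
        (fun _ => q ^ S.card), if_pos (Finset.empty_mem_powerset S),
        Nat.sub_add_cancel hq]
    · have hLHS : (∑ D ∈ S.powerset, if IsConn tl hd ↑(D ∪ C) then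
          (q - 1) ^ (D.card + C.card + 1 - Fintype.card V) else 0) = 0 := by
        refine Finset.sum_eq_zero fun D hD => ?_
        rw [if_neg]
        intro hc
        exact hconn ((habs D (Finset.mem_powerset.mp hD)).mp hc)
      have hRHS : (∑ T ∈ S.powerset, if IsConn tl hd ↑(T ∪ C) ∧
            T.card + C.card + 1 = Fintype.card V
            then q ^ extactAux tl hd T S C else 0) = 0 := by
        refine Finset.sum_eq_zero fun T hT => ?_
        rw [if_neg]
        rintro ⟨hc, -⟩
        exact hconn ((habs T (Finset.mem_powerset.mp hT)).mp hc)
      rw [hLHS, hRHS]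
termination_by S.card
decreasing_by
  · exact hS' ▸ Finset.card_lt_card (Finset.erase_ssubset heS)
  · exact hS' ▸ Finset.card_lt_card (Finset.erase_ssubset heS)

end Key

section Counting

variable {V E k : Type} [Fintype V] [Nonempty V] [Fintype E] [Field k] [Fintype k]
  (tl hd : E → V)

lemma isoRep_equiv : Equivalence (fun x y : E → k => IsoRep tl hd x y) := by
  constructor
  · intro x
    exact ⟨1, fun e => by simp⟩
  · rintro x y ⟨g, hg⟩
    refine ⟨g⁻¹, fun e => ?_⟩
    rw [hg e]
    simp only [Pi.inv_apply, Units.val_inv_eq_inv_val]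
    field_simp
  · rintro x y z ⟨g, hg⟩ ⟨g', hg'⟩
    refine ⟨g' * g, fun e => ?_⟩
    rw [hg' e, hg e]
    simp only [Pi.mul_apply, Units.val_mul]
    field_simp

lemma isoRep_supp {x y : E → k} (h : IsoRep tl hd x y) (e : E) :
    (x e ≠ 0 ↔ y e ≠ 0) := by
  obtain ⟨g, hg⟩ := h
  rw [hg e]
  simp [mul_eq_zero, inv_eq_zero]

lemma nat_card_eq_sum_fibers {α β : Type} [Finite α] [Fintype β] (f : α → β) :
    Nat.card α = ∑ b : β, Nat.card {a : α // f a = b} := by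
  letI := Fintype.ofFinite α
  letI : ∀ b, Fintype {a : α // f a = b} := fun b => Fintype.ofFinite _
  rw [Nat.card_eq_fintype_card, ← Fintype.card_congr (Equiv.sigmaFiberEquiv f),
    Fintype.card_sigma]
  exact Finset.sum_congr rfl fun b _ => (Nat.card_eq_fintype_card).symm

lemma nat_card_eq_mul {α β : Type} [Finite α] [Finite β] (f : α → β) (m : ℕ)
    (hfib : ∀ b, Nat.card {a : α // f a = b} = m) :
    Nat.card α = Nat.card β * m := by
  cases nonempty_fintype β
  rw [nat_card_eq_sum_fibers f]
  simp only [hfib, Finset.sum_const, smul_eq_mul, Nat.card_eq_fintype_card]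
  rw [Finset.card_univ]

lemma stab_card {D : Finset E} (hconn : IsConn tl hd ↑D) :
    Nat.card {h : V → kˣ // ∀ e ∈ D, h (hd e) = h (tl e)} = Fintype.card k - 1 := by
  have hval : ∀ (h : {h : V → kˣ // ∀ e ∈ D, h (hd e) = h (tl e)}) (a b : V),
      joinedRel tl hd (↑D) a b → h.1 a = h.1 b := by
    intro h a b hab
    induction hab with
    | rel a b hab =>
      obtain ⟨f, hf, hor⟩ := hab
      rcases hor with ⟨h1, h2⟩ | ⟨h1, h2⟩
      · rw [← h1, ← h2]
        exact (h.2 f (Finset.mem_coe.mp hf)).symm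
      · rw [← h1, ← h2]
        exact h.2 f (Finset.mem_coe.mp hf)
    | refl x => rfl
    | symm x y _ ih => exact ih.symm
    | trans x y z _ _ ih1 ih2 => exact ih1.trans ih2
  have v₀ : V := Classical.arbitrary V
  have eqv : {h : V → kˣ // ∀ e ∈ D, h (hd e) = h (tl e)} ≃ kˣ :=
    { toFun := fun h => h.1 v₀
      invFun := fun c => ⟨fun _ => c, fun _ _ => rfl⟩
      left_inv := fun h => by
        apply Subtype.ext
        funext v
        exact hval h v₀ v (hconn v₀ v)
      right_inv := fun c => rfl }
  rw [Nat.card_congr eqv, Nat.card_eq_fintype_card, Fintype.card_units]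

lemma class_card {D : Finset E} (hconn : IsConn tl hd ↑D)
    (x : E → k) (hx : ∀ e, x e ≠ 0 ↔ e ∈ D) :
    Nat.card {y : {x' : E → k // ∀ e, x' e ≠ 0 ↔ e ∈ D} // IsoRep tl hd x y.1}
      * (Fintype.card k - 1) = (Fintype.card k - 1) ^ Fintype.card V := by
  classical
  set q := Fintype.card k with hqdef
  -- the orbit map
  have hsupp : ∀ (g : V → kˣ) (e : E),
      ((g (hd e) : k) * x e * ((g (tl e) : k))⁻¹ ≠ 0 ↔ e ∈ D) := by
    intro g e
    rw [← hx e]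
    simp [mul_eq_zero, inv_eq_zero]
  set φ : (V → kˣ) → {y : {x' : E → k // ∀ e, x' e ≠ 0 ↔ e ∈ D} // IsoRep tl hd x y.1} :=
    fun g => ⟨⟨fun e => (g (hd e) : k) * x e * ((g (tl e) : k))⁻¹, hsupp g⟩,
      ⟨g, fun e => rfl⟩⟩ with hφ
  have hfib : ∀ y, Nat.card {g : V → kˣ // φ g = y} = q - 1 := by
    intro y
    obtain ⟨g₀, hg₀⟩ := y.2
    have hcond : ∀ g : V → kˣ, φ g = y ↔
        (∀ e, (g (hd e) : k) * x e * ((g (tl e) : k))⁻¹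
          = (g₀ (hd e) : k) * x e * ((g₀ (tl e) : k))⁻¹) := by
      intro g
      rw [Subtype.ext_iff, Subtype.ext_iff]
      constructor
      · intro h e
        have := congrFun h e
        simpa using this.trans (hg₀ e)
      · intro h
        funext e
        exact (h e).trans (hg₀ e).symm
    have e1 : {g : V → kˣ // φ g = y} ≃
        {h : V → kˣ // ∀ e ∈ D, h (hd e) = h (tl e)} := by
      refine
        { toFun := fun g => ⟨g.1 * g₀⁻¹, ?_⟩
          invFun := fun h => ⟨h.1 * g₀, ?_⟩
          left_inv := fun g => by
            apply Subtype.ext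
            simp [mul_assoc]
          right_inv := fun h => by
            apply Subtype.ext
            simp [mul_assoc] }
      · -- forward condition
        intro e he
        have hxe : x e ≠ 0 := (hx e).mpr he
        have h1 := (hcond g.1).mp g.2 e
        have hA : (g.1 (hd e) : k) * (g₀ (hd e) : k)⁻¹
            = (g.1 (tl e) : k) * (g₀ (tl e) : k)⁻¹ := by
          field_simp at h1
          have h4 : (g.1 (hd e) : k) * (g₀ (tl e) : k)
              = (g₀ (hd e) : k) * (g.1 (tl e) : k) := by
            apply mul_right_cancel₀ hxe
            linear_combination (x e) * h1
          field_simp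
          linear_combination h4
        apply Units.ext
        simpa [Pi.mul_apply, Pi.inv_apply, Units.val_mul, Units.val_inv_eq_inv_val]
          using hA
      · -- backward condition
        rw [hcond]
        intro e
        by_cases hxe : x e = 0
        · simp [hxe]
        · have he : e ∈ D := (hx e).mp hxe
          have hh := h.2 e he
          simp only [Pi.mul_apply, Units.val_mul]
          rw [hh]
          field_simp
    rw [Nat.card_congr e1, stab_card tl hd hconn]
  have hG := nat_card_eq_mul φ (q - 1) hfib
  rw [Nat.card_eq_fintype_card, Fintype.card_fun, Fintype.card_units] at hG
  rw [← hG]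

lemma nD_formula {D : Finset E} (hconn : IsConn tl hd ↑D) :
    Nat.card (Quot fun x y : {x : E → k // ∀ e, x e ≠ 0 ↔ e ∈ D} =>
        IsoRep tl hd x.1 y.1)
      = (Fintype.card k - 1) ^ (D.card + 1 - Fintype.card V) := by
  classical
  have hq2 : 2 ≤ Fintype.card k := Fintype.one_lt_card
  have hV1 : 1 ≤ Fintype.card V := Fintype.card_pos
  have hDV : Fintype.card V ≤ D.card + 1 := card_le_of_isConn tl hd hconn
  have hpos : 0 < Fintype.card k - 1 := by omega
  have hexp : Fintype.card V - 1 + 1 = Fintype.card V := by omega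
  have hexp2 : D.card + 1 - Fintype.card V + (Fintype.card V - 1) = D.card := by omega
  have req : Equivalence (fun x y : {x : E → k // ∀ e, x e ≠ 0 ↔ e ∈ D} =>
      IsoRep tl hd x.1 y.1) :=
    ⟨fun x => (isoRep_equiv tl hd).refl x.1,
     fun h => (isoRep_equiv tl hd).symm h,
     fun h h' => (isoRep_equiv tl hd).trans h h'⟩
  -- cardinality of XD
  have hXD : Nat.card {x : E → k // ∀ e, x e ≠ 0 ↔ e ∈ D}
      = (Fintype.card k - 1) ^ D.card := by
    have eqv : {x : E → k // ∀ e, x e ≠ 0 ↔ e ∈ D} ≃ ({e : E // e ∈ D} → kˣ) :=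
      { toFun := fun x => fun e => Units.mk0 (x.1 e.1) ((x.2 e.1).mpr e.2)
        invFun := fun u => ⟨fun e => if h : e ∈ D then (u ⟨e, h⟩ : k) else 0, by
          intro e
          by_cases h : e ∈ D
          · simp [h]
          · simp [h]⟩
        left_inv := fun x => by
          apply Subtype.ext
          funext e
          by_cases h : e ∈ D
          · simp [h]
          · simp only [dif_neg h]
            by_contra hc
            exact h ((x.2 e).mp (Ne.symm hc))
        right_inv := fun u => by
          funext e
          apply Units.ext
          simp [e.2] }
    rw [Nat.card_congr eqv, Nat.card_eq_fintype_card, Fintype.card_fun,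
      Fintype.card_units, Fintype.card_coe]
  -- the class of each point has (q-1)^(n-1) elements
  have hcls : ∀ x : {x : E → k // ∀ e, x e ≠ 0 ↔ e ∈ D},
      Nat.card {y : {x : E → k // ∀ e, x e ≠ 0 ↔ e ∈ D} // IsoRep tl hd x.1 y.1}
        = (Fintype.card k - 1) ^ (Fintype.card V - 1) := by
    intro x
    have h1 := class_card tl hd hconn x.1 x.2
    have h2 : (Fintype.card k - 1) ^ Fintype.card V
        = (Fintype.card k - 1) ^ (Fintype.card V - 1) * (Fintype.card k - 1) := by
      rw [← pow_succ, hexp]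
    rw [h2] at h1
    exact Nat.eq_of_mul_eq_mul_right hpos h1
  have hquot := nat_card_eq_mul
    (Quot.mk fun x y : {x : E → k // ∀ e, x e ≠ 0 ↔ e ∈ D} => IsoRep tl hd x.1 y.1)
    ((Fintype.card k - 1) ^ (Fintype.card V - 1)) (by
    intro c
    obtain ⟨x, rfl⟩ := Quot.exists_rep c
    have eqv : {y : {x : E → k // ∀ e, x e ≠ 0 ↔ e ∈ D} //
          Quot.mk _ y = Quot.mk (fun x y : {x : E → k // ∀ e, x e ≠ 0 ↔ e ∈ D} =>
            IsoRep tl hd x.1 y.1) x}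
        ≃ {y : {x : E → k // ∀ e, x e ≠ 0 ↔ e ∈ D} // IsoRep tl hd x.1 y.1} := by
      apply Equiv.subtypeEquivRight
      intro y
      rw [Quot.eq, Equivalence.eqvGen_iff req]
      exact ⟨fun h => req.symm h, fun h => req.symm h⟩
    rw [Nat.card_congr eqv]
    exact hcls x)
  rw [hXD] at hquot
  have hpow : (Fintype.card k - 1) ^ D.card
      = (Fintype.card k - 1) ^ (D.card + 1 - Fintype.card V)
        * (Fintype.card k - 1) ^ (Fintype.card V - 1) := by
    rw [← pow_add, hexp2]
  rw [hpow] at hquot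
  exact (Nat.eq_of_mul_eq_mul_right (Nat.pow_pos hpos) hquot.symm)

end Counting

section Assembly

variable {V E k : Type} [Fintype V] [Nonempty V] [Fintype E] [Field k] [Fintype k]

/-- The support map on the set of isomorphism classes. -/
def suppMap (tl hd : E → V) :
    (Quot fun x y : {x : E → k // IsConn tl hd {e | x e ≠ 0}} =>
      IsoRep tl hd x.1 y.1) → {D : Finset E // IsConn tl hd ↑D} :=
  Quot.lift
    (fun x => ⟨Finset.univ.filter (fun e => x.1 e ≠ 0), by
      have hset : (↑(Finset.univ.filter fun e => x.1 e ≠ 0) : Set E)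
          = {e | x.1 e ≠ 0} := by
        ext e
        simp
      rw [hset]
      exact x.2⟩)
    (fun a b hab => by
      apply Subtype.ext
      ext e
      simp only [Finset.mem_filter, Finset.mem_univ, true_and]
      exact isoRep_supp tl hd hab e)

lemma fiber_card (tl hd : E → V) (D : {D : Finset E // IsConn tl hd ↑D}) :
    Nat.card {c : Quot fun x y : {x : E → k // IsConn tl hd {e | x e ≠ 0}} =>
        IsoRep tl hd x.1 y.1 // suppMap tl hd c = D}
      = (Fintype.card k - 1) ^ (D.1.card + 1 - Fintype.card V) := by
  classical
  rw [← nD_formula tl hd D.2]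
  apply Nat.card_congr
  apply Equiv.symm
  have hBeq : Equivalence (fun x y : {x : E → k // IsConn tl hd {e | x e ≠ 0}} =>
      IsoRep tl hd x.1 y.1) :=
    ⟨fun x => (isoRep_equiv tl hd).refl x.1,
     fun h => (isoRep_equiv tl hd).symm h,
     fun h h' => (isoRep_equiv tl hd).trans h h'⟩
  -- the forward map
  refine Equiv.ofBijective (Quot.lift (fun x => ?_) ?_) ⟨?_, ?_⟩
  · -- construction on representatives
    refine ⟨Quot.mk _ ⟨x.1, ?_⟩, ?_⟩
    · have hset : {e : E | x.1 e ≠ 0} = (↑D.1 : Set E) := by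
        ext e
        simp [x.2 e]
      rw [hset]
      exact D.2
    · apply Subtype.ext
      show Finset.univ.filter (fun e => x.1 e ≠ 0) = D.1
      ext e
      simp [x.2 e]
  · -- well-definedness
    intro a b hab
    apply Subtype.ext
    exact Quot.sound hab
  · -- injectivity
    intro c1 c2
    induction c1 using Quot.ind with | _ a =>
    induction c2 using Quot.ind with | _ b =>
    intro h
    have h' := Subtype.ext_iff.mp h
    have h'' : Relation.EqvGen (fun x y : {x : E → k // IsConn tl hd {e | x e ≠ 0}} =>
        IsoRep tl hd x.1 y.1) ⟨a.1, _⟩ ⟨b.1, _⟩ := Quot.eq.mp h'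
    have hiso : IsoRep tl hd a.1 b.1 :=
      (Equivalence.eqvGen_iff hBeq).mp h''
    exact Quot.sound hiso
  · -- surjectivity
    rintro ⟨c, hc⟩
    obtain ⟨x, rfl⟩ := Quot.exists_rep c
    have hc' : Finset.univ.filter (fun e => x.1 e ≠ 0) = D.1 := by
      have := Subtype.ext_iff.mp hc
      exact this
    have hx : ∀ e, x.1 e ≠ 0 ↔ e ∈ D.1 := by
      intro e
      rw [← hc']
      simp
    refine ⟨Quot.mk _ ⟨x.1, hx⟩, ?_⟩
    apply Subtype.ext
    show Quot.mk _ _ = Quot.mk _ x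
    congr 1

end Assembly

/-- the number of isomorphism classes of indecomposable toric
representations of a connected quiver over a finite field with `q` elements equals
`Σ_{spanning trees T} q ^ extact(Q, T)`. -/
theorem statement2 {V E : Type} [Fintype V] [Nonempty V] [Fintype E] [LinearOrder E]
    (tl hd : E → V) (hQ : IsConn tl hd Set.univ)
    (q : ℕ) (k : Type) [Field k] [Fintype k] (hk : Fintype.card k = q) :
    Nat.card (Quot fun x y : {x : E → k // IsConn tl hd {e | x e ≠ 0}} =>
        IsoRep tl hd x.1 y.1)
      = ∑ T ∈ Finset.univ.filter fun T : Finset E => IsSpanningTree tl hd T,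
          q ^ extact tl hd T := by
  classical
  subst hk
  have hq2 : 2 ≤ Fintype.card k := Fintype.one_lt_card
  have hq1 : 1 ≤ Fintype.card k := by omega
  have h1 := nat_card_eq_sum_fibers (suppMap (k := k) tl hd)
  have h2 : (∑ D : {D : Finset E // IsConn tl hd ↑D},
        Nat.card {c : Quot fun x y : {x : E → k // IsConn tl hd {e | x e ≠ 0}} =>
          IsoRep tl hd x.1 y.1 // suppMap tl hd c = D})
      = ∑ D : {D : Finset E // IsConn tl hd ↑D},
          (Fintype.card k - 1) ^ (D.1.card + 1 - Fintype.card V) :=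
    Finset.sum_congr rfl (fun D _ => fiber_card tl hd D)
  have h3 : (∑ D ∈ Finset.univ.filter (fun D : Finset E => IsConn tl hd ↑D),
        (Fintype.card k - 1) ^ (D.card + 1 - Fintype.card V))
      = ∑ D : {D : Finset E // IsConn tl hd ↑D},
          (Fintype.card k - 1) ^ (D.1.card + 1 - Fintype.card V) :=
    Finset.sum_subtype _ (by intro D; simp) _
  have hkey := key tl hd (Fintype.card k) hq1 Finset.univ ∅
    (Finset.disjoint_empty_right _) (by rw [ncomp_empty]; simp)
  simp only [Finset.powerset_univ, Finset.union_empty, Finset.card_empty,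
    add_zero] at hkey
  rw [h1, h2, ← h3, Finset.sum_filter, hkey, Finset.sum_filter]
  refine Finset.sum_congr rfl (fun T _ => ?_)
  unfold IsSpanningTree extact
  by_cases hcond : IsConn tl hd ↑T ∧ T.card + 1 = Fintype.card V
  · rw [if_pos hcond, if_pos hcond]
  · rw [if_neg hcond, if_neg hcond]


end
end

section
/- Let Q be a connected quiver with vertex set V and edge set E, and let q be a prime power. The number of isomorphism classes of indecomposable toric representations of Q over the finite field F_q equals Σ_{D ⊆ E, (V,D) connected} (q − 1)^{#D − #V + 1} (the specialisation 𝐓_Q(1, q) of the Tutte polynomial of the underlying graph). -/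
open Classical Finset

noncomputable section

section Helpers

variable {V E k : Type} [Field k] (tl hd : E → V)

lemma isoRep_refl (x : E → k) : IsoRep tl hd x x :=
  ⟨fun _ => 1, fun e => by simp⟩

lemma isoRep_symm {x y : E → k} (h : IsoRep tl hd x y) : IsoRep tl hd y x := by
  obtain ⟨g, hg⟩ := h
  refine ⟨fun v => (g v)⁻¹, fun e => ?_⟩
  have h1 : (g (hd e) : k) ≠ 0 := Units.ne_zero _
  have h2 : (g (tl e) : k) ≠ 0 := Units.ne_zero _
  rw [hg e]
  simp only [Units.val_inv_eq_inv_val]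
  field_simp

lemma isoRep_trans {x y z : E → k} (hxy : IsoRep tl hd x y) (hyz : IsoRep tl hd y z) :
    IsoRep tl hd x z := by
  obtain ⟨g, hg⟩ := hxy
  obtain ⟨g', hg'⟩ := hyz
  refine ⟨fun v => g' v * g v, fun e => ?_⟩
  rw [hg' e, hg e]
  simp only [Units.val_mul, mul_inv]
  ring

lemma isoRep_support {x y : E → k} (h : IsoRep tl hd x y) (e : E) :
    x e ≠ 0 ↔ y e ≠ 0 := by
  obtain ⟨g, hg⟩ := h
  have h1 : (g (hd e) : k) ≠ 0 := Units.ne_zero _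
  have h2 : ((g (tl e) : k))⁻¹ ≠ 0 := inv_ne_zero (Units.ne_zero _)
  rw [hg e]
  simp [mul_ne_zero_iff, h1, h2]

lemma units_const_of_conn {S : Set E} (hS : IsConn tl hd S) (g : V → kˣ)
    (hg : ∀ e ∈ S, g (tl e) = g (hd e)) (a b : V) : g a = g b := by
  have h : Relation.EqvGen
      (fun a b => ∃ e ∈ S, (tl e = a ∧ hd e = b) ∨ (tl e = b ∧ hd e = a)) a b := hS a b
  induction h with
  | rel u v huv =>
    obtain ⟨e, he, h'⟩ := huv
    rcases h' with ⟨h1, h2⟩ | ⟨h1, h2⟩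
    · rw [← h1, ← h2]; exact hg e he
    · rw [← h1, ← h2]; exact (hg e he).symm
  | refl => rfl
  | symm _ _ _ ih => exact ih.symm
  | trans _ _ _ _ _ ih1 ih2 => exact ih1.trans ih2

end Helpers

section Count

variable {V E k : Type} [Fintype V] [Nonempty V] [Fintype E] [Field k] [Fintype k]
variable (tl hd : E → V)

lemma nat_card_sigma {ι : Type} [Fintype ι] (f : ι → Type) [∀ i, Finite (f i)] :
    Nat.card ((i : ι) × f i) = ∑ i, Nat.card (f i) := by
  letI : ∀ i, Fintype (f i) := fun i => Fintype.ofFinite (f i)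
  simp [Nat.card_eq_fintype_card, Fintype.card_sigma]

/-- Orbit–stabilizer: the iso class of a rep with connected support has
`(q-1)^(#V)/(q-1)` elements. -/
lemma orbit_card (x₀ : E → k) (hc : IsConn tl hd {e | x₀ e ≠ 0}) :
    Nat.card {x : E → k // IsoRep tl hd x₀ x} * (Fintype.card k - 1)
      = (Fintype.card k - 1) ^ Fintype.card V := by
  classical
  set O := {x : E → k // IsoRep tl hd x₀ x} with hO
  have ψprop : ∀ g : V → kˣ, IsoRep tl hd x₀
      (fun e => (g (hd e) : k) * x₀ e * ((g (tl e) : k))⁻¹) := fun g => ⟨g, fun e => rfl⟩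
  set ψ : (V → kˣ) → O := fun g =>
    ⟨fun e => (g (hd e) : k) * x₀ e * ((g (tl e) : k))⁻¹, ψprop g⟩ with hψ
  have key : ∀ x : O, Nat.card {g : V → kˣ // ψ g = x} = Fintype.card k - 1 := by
    intro x
    obtain ⟨g₀, hg₀⟩ := x.2
    have hψg₀ : ψ g₀ = x := Subtype.ext (funext fun e => (hg₀ e).symm)
    set v₀ : V := Classical.arbitrary V with hv₀
    have fib_iff : ∀ g : V → kˣ, ψ g = x ↔
        ∀ e, (g (hd e) : k) * x₀ e * ((g (tl e) : k))⁻¹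
          = (g₀ (hd e) : k) * x₀ e * ((g₀ (tl e) : k))⁻¹ := by
      intro g
      constructor
      · intro h e
        exact congrFun (congrArg Subtype.val (h.trans hψg₀.symm)) e
      · intro h
        refine Subtype.ext (funext fun e => ?_)
        have := congrFun (congrArg Subtype.val hψg₀) e
        exact (h e).trans this
    have key2 : ∀ g : V → kˣ, ψ g = x → ∀ v : V, g v * (g₀ v)⁻¹ = g v₀ * (g₀ v₀)⁻¹ := by
      intro g hgx v
      have hconst : ∀ e ∈ {e | x₀ e ≠ 0},
          g (tl e) * (g₀ (tl e))⁻¹ = g (hd e) * (g₀ (hd e))⁻¹ := by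
        intro e he
        have hx : x₀ e ≠ 0 := he
        have heq := (fib_iff g).mp hgx e
        have h1 : (g (hd e) : k) ≠ 0 := Units.ne_zero _
        have h2 : (g (tl e) : k) ≠ 0 := Units.ne_zero _
        have h3 : (g₀ (hd e) : k) ≠ 0 := Units.ne_zero _
        have h4 : (g₀ (tl e) : k) ≠ 0 := Units.ne_zero _
        field_simp at heq
        have heq2 : (g (hd e) : k) * (g₀ (tl e) : k) = (g₀ (hd e) : k) * (g (tl e) : k) := by
          have h6 : x₀ e * ((g (hd e) : k) * (g₀ (tl e) : k))
              = x₀ e * ((g₀ (hd e) : k) * (g (tl e) : k)) := by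
            first
            | linear_combination heq
            | linear_combination -heq
            | linear_combination x₀ e * heq
          exact mul_left_cancel₀ hx h6
        ext
        simp only [Units.val_mul, Units.val_inv_eq_inv_val]
        field_simp
        first
        | linear_combination -heq2
        | linear_combination heq2
      exact units_const_of_conn tl hd hc (fun w => g w * (g₀ w)⁻¹) hconst v v₀
    have inv_mem : ∀ c : kˣ, ψ (fun v => c * g₀ v) = x := by
      intro c
      refine (fib_iff (fun v => c * g₀ v)).mpr fun e => ?_
      have hcne : (c : k) ≠ 0 := Units.ne_zero _
      have h3 : (g₀ (hd e) : k) ≠ 0 := Units.ne_zero _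
      have h4 : (g₀ (tl e) : k) ≠ 0 := Units.ne_zero _
      simp only [Units.val_mul, mul_inv]
      field_simp
    have Φ : {g : V → kˣ // ψ g = x} ≃ kˣ :=
      { toFun := fun g => g.1 v₀ * (g₀ v₀)⁻¹
        invFun := fun c => ⟨fun v => c * g₀ v, inv_mem c⟩
        left_inv := by
          intro g
          refine Subtype.ext (funext fun v => ?_)
          have hk2 := key2 g.1 g.2 v
          show g.1 v₀ * (g₀ v₀)⁻¹ * g₀ v = g.1 v
          calc g.1 v₀ * (g₀ v₀)⁻¹ * g₀ v = g.1 v * (g₀ v)⁻¹ * g₀ v := by rw [← hk2]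
          _ = g.1 v := by group
        right_inv := by
          intro c
          show (fun v => c * g₀ v) v₀ * (g₀ v₀)⁻¹ = c
          simp }
    rw [Nat.card_congr Φ, Nat.card_eq_fintype_card, Fintype.card_units]
  have hsig := Nat.card_congr (Equiv.sigmaFiberEquiv ψ).symm
  rw [nat_card_sigma] at hsig
  have hsum : ∑ x : O, Nat.card {g : V → kˣ // ψ g = x}
      = Nat.card O * (Fintype.card k - 1) := by
    rw [Finset.sum_congr rfl fun x _ => key x, Finset.sum_const, Finset.card_univ,
      Nat.card_eq_fintype_card, smul_eq_mul]
  rw [hsum] at hsig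
  rw [← hsig, Nat.card_eq_fintype_card]
  simp [Fintype.card_fun, Fintype.card_units]


/-- the number of isomorphism classes of indecomposable toric
representations of a connected quiver over a finite field with `q` elements equals
`Σ_{D ⊆ E, (V, D) connected} (q − 1) ^ (#D − #V + 1)`, i.e. `𝐓_Q(1, q)`. -/
theorem statement3 {V E : Type} [Fintype V] [Nonempty V] [Fintype E]
    (tl hd : E → V) (hQ : IsConn tl hd Set.univ)
    (q : ℕ) (k : Type) [Field k] [Fintype k] (hk : Fintype.card k = q) :
    Nat.card (Quot fun x y : {x : E → k // IsConn tl hd {e | x e ≠ 0}} =>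
        IsoRep tl hd x.1 y.1)
      = ∑ D ∈ Finset.univ.filter fun D : Finset E => IsConn tl hd ↑D,
          (q - 1) ^ (D.card + 1 - Fintype.card V) := by
  classical
  subst hk
  set q := Fintype.card k with hq
  set n := Fintype.card V with hn
  set X := {x : E → k // IsConn tl hd {e | x e ≠ 0}} with hX
  set r := fun x y : X => IsoRep tl hd x.1 y.1 with hr
  have hre : Equivalence r :=
    ⟨fun x => isoRep_refl tl hd x.1, fun {_ _} h => isoRep_symm tl hd h,
      fun {_ _ _} h h' => isoRep_trans tl hd h h'⟩
  have hmk : ∀ a b : X, Quot.mk r a = Quot.mk r b ↔ r a b := fun a b => by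
    rw [Quot.eq]; exact hre.eqvGen_iff
  have hresp : ∀ a b : X, r a b →
      (univ.filter fun e => a.1 e ≠ 0) = (univ.filter fun e => b.1 e ≠ 0) := by
    intro a b h
    ext e
    simp only [mem_filter, mem_univ, true_and]
    exact isoRep_support tl hd h e
  set sp : Quot r → Finset E :=
    Quot.lift (fun x : X => univ.filter fun e => x.1 e ≠ 0) hresp with hsp
  have main : ∀ D : Finset E, Nat.card {c : Quot r // sp c = D}
      = if IsConn tl hd ↑D then (q - 1) ^ (D.card + 1 - n) else 0 := by
    intro D
    by_cases hD : IsConn tl hd ↑D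
    · rw [if_pos hD]
      set Y := {y : X // (univ.filter fun e => y.1 e ≠ 0) = D} with hY
      set F := {c : Quot r // sp c = D} with hF
      letI : Fintype F := Fintype.ofFinite F
      -- cardinality of Y
      have E1 : Y ≃ ({e // e ∈ D} → kˣ) :=
        { toFun := fun y e => Units.mk0 (y.1.1 e.1)
            (by
              have h' : e.1 ∈ univ.filter fun e => y.1.1 e ≠ 0 := by rw [y.2]; exact e.2
              exact (mem_filter.mp h').2)
          invFun := fun u =>
            ⟨⟨fun e => if h : e ∈ D then (u ⟨e, h⟩ : k) else 0, by
              have hset : {e | (if h : e ∈ D then (u ⟨e, h⟩ : k) else 0) ≠ 0} = ↑D := by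
                ext e; by_cases h : e ∈ D <;> simp [h]
              rw [hset]; exact hD⟩, by
              ext e
              by_cases h : e ∈ D <;> simp [h]⟩
          left_inv := by
            intro y
            refine Subtype.ext (Subtype.ext (funext fun e => ?_))
            by_cases h : e ∈ D
            · simp [h]
            · simp only [h, dif_neg, not_false_iff]
              have h' : e ∉ univ.filter fun e => y.1.1 e ≠ 0 := by rw [y.2]; exact h
              simp only [mem_filter, mem_univ, true_and, not_not] at h'
              exact h'.symm
          right_inv := by
            intro u
            funext e
            refine Units.ext ?_
            simp [e.2] }
      have cardY : Nat.card Y = (q - 1) ^ D.card := by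
        rw [Nat.card_congr E1, Nat.card_eq_fintype_card]
        simp [Fintype.card_fun, Fintype.card_units, Fintype.card_coe]
        rfl
      -- fibers of the projection Y → F
      set π : Y → F := fun y => ⟨Quot.mk r y.1, y.2⟩ with hπ
      have fibcard : ∀ c : F, Nat.card {y : Y // π y = c} * (q - 1) = (q - 1) ^ n := by
        intro c
        obtain ⟨x₀, hx₀⟩ := Quot.exists_rep c.1
        have hx₀D : (univ.filter fun e => x₀.1 e ≠ 0) = D := by
          have hc2 := c.2
          rw [← hx₀] at hc2
          exact hc2
        have Θ : {y : Y // π y = c} ≃ {x : E → k // IsoRep tl hd x₀.1 x} :=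
          { toFun := fun y =>
              ⟨y.1.1.1, by
                have h1 : Quot.mk r y.1.1 = Quot.mk r x₀ := by
                  have h2 := congrArg Subtype.val y.2
                  exact h2.trans hx₀.symm
                exact isoRep_symm tl hd ((hmk _ _).mp h1)⟩
            invFun := fun x =>
              ⟨⟨⟨x.1, by
                have hset : {e | x.1 e ≠ 0} = {e | x₀.1 e ≠ 0} := by
                  ext e
                  exact (isoRep_support tl hd x.2 e).symm
                rw [hset]; exact x₀.2⟩, by
                rw [← hx₀D]
                ext e
                simp only [mem_filter, mem_univ, true_and]
                exact (isoRep_support tl hd x.2 e).symm⟩, by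
                apply Subtype.ext
                show Quot.mk r _ = c.1
                rw [← hx₀]
                exact Quot.sound (isoRep_symm tl hd x.2)⟩
            left_inv := fun y => Subtype.ext (Subtype.ext (Subtype.ext rfl))
            right_inv := fun x => Subtype.ext rfl }
        rw [Nat.card_congr Θ]
        exact orbit_card tl hd x₀.1 x₀.2
      have hy : Nat.card Y * (q - 1) = Nat.card F * (q - 1) ^ n := by
        have h1 := Nat.card_congr (Equiv.sigmaFiberEquiv π).symm
        rw [nat_card_sigma] at h1
        calc Nat.card Y * (q - 1)
            = (∑ c : F, Nat.card {y : Y // π y = c}) * (q - 1) := by rw [h1]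
          _ = ∑ c : F, Nat.card {y : Y // π y = c} * (q - 1) := by rw [Finset.sum_mul]
          _ = ∑ _c : F, (q - 1) ^ n := Finset.sum_congr rfl fun c _ => fibcard c
          _ = Nat.card F * (q - 1) ^ n := by
              rw [Finset.sum_const, Finset.card_univ, Nat.card_eq_fintype_card, smul_eq_mul]
      have hcomb : (q - 1) ^ (D.card + 1) = Nat.card F * (q - 1) ^ n := by
        rw [pow_succ, ← cardY]; exact hy
      have hFpos : 0 < Nat.card F := by
        have hne : Nonempty F := by
          refine ⟨⟨Quot.mk r ⟨fun e => if e ∈ D then 1 else 0, ?_⟩, ?_⟩⟩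
          · have hset : {e | (if e ∈ D then (1 : k) else 0) ≠ 0} = ↑D := by
              ext e; by_cases h : e ∈ D <;> simp [h]
            rw [hset]; exact hD
          · show (univ.filter fun e => (if e ∈ D then (1 : k) else 0) ≠ 0) = D
            ext e; by_cases h : e ∈ D <;> simp [h]
        exact Nat.card_pos
      have hq2 : 1 < q := Fintype.one_lt_card
      by_cases hq1 : q - 1 = 1
      · rw [hq1] at hcomb ⊢
        simp only [one_pow, mul_one] at hcomb ⊢
        omega
      · have hq3 : 2 ≤ q - 1 := by omega
        have hng : n ≤ D.card + 1 := by
          by_contra hlt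
          push_neg at hlt
          have h5 : (q - 1) ^ (D.card + 1) < (q - 1) ^ n := Nat.pow_lt_pow_right hq3 hlt
          have h6 : (q - 1) ^ n ≤ Nat.card F * (q - 1) ^ n :=
            Nat.le_mul_of_pos_left _ hFpos
          omega
        have hsplit : (q - 1) ^ (D.card + 1) = (q - 1) ^ (D.card + 1 - n) * (q - 1) ^ n := by
          rw [← pow_add, Nat.sub_add_cancel hng]
        rw [hsplit] at hcomb
        exact (Nat.eq_of_mul_eq_mul_right (pow_pos (by omega) n) hcomb).symm
    · rw [if_neg hD]
      have hEmpty : IsEmpty {c : Quot r // sp c = D} := by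
        constructor
        rintro ⟨c, hc⟩
        obtain ⟨x₀, rfl⟩ := Quot.exists_rep c
        have hsupp : (univ.filter fun e => x₀.1 e ≠ 0) = D := hc
        apply hD
        have hset : {e | x₀.1 e ≠ 0} = ↑D := by
          rw [← hsupp]
          ext e
          simp
        rw [← hset]
        exact x₀.2
      exact Nat.card_of_isEmpty
  calc Nat.card (Quot r)
      = Nat.card ((D : Finset E) × {c : Quot r // sp c = D}) :=
        (Nat.card_congr (Equiv.sigmaFiberEquiv sp)).symm
    _ = ∑ D : Finset E, Nat.card {c : Quot r // sp c = D} := nat_card_sigma _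
    _ = ∑ D : Finset E, if IsConn tl hd ↑D then (q - 1) ^ (D.card + 1 - n) else 0 :=
        Finset.sum_congr rfl fun D _ => main D
    _ = ∑ D ∈ Finset.univ.filter fun D : Finset E => IsConn tl hd ↑D,
          (q - 1) ^ (D.card + 1 - n) := (Finset.sum_filter _ _).symm


end Count

end
end

section
/- Let Q be a connected quiver with a linear order on its edge set E. Then, as polynomials in ℤ[X], Σ_{spanning trees T of Q} X^{extact(Q,T)} = Σ_{D ⊆ E, (V,D) connected} (X − 1)^{#D − #V + 1}. In particular, the polynomial Σ_T X^{extact(Q,T)} does not depend on the chosen linear order on E. -/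
open Classical Finset

noncomputable section

namespace Stmt4
variable {V E : Type} {tl hd : E → V}

lemma joined_mono {C D : Set E} (h : C ⊆ D) {a b : V}
    (hab : joinedRel tl hd C a b) : joinedRel tl hd D a b := by
  refine Relation.EqvGen.mono ?_ _ _ hab
  rintro x y ⟨e, he, hor⟩
  exact ⟨e, h he, hor⟩

lemma joined_refl (C : Set E) (a : V) : joinedRel tl hd C a a := Relation.EqvGen.refl a

lemma joined_symm {C : Set E} {a b : V} (h : joinedRel tl hd C a b) :
    joinedRel tl hd C b a := Relation.EqvGen.symm _ _ h

lemma joined_trans {C : Set E} {a b c : V} (h : joinedRel tl hd C a b)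
    (h2 : joinedRel tl hd C b c) : joinedRel tl hd C a c := Relation.EqvGen.trans _ _ _ h h2

lemma joined_edge {C : Set E} {e : E} (h : e ∈ C) : joinedRel tl hd C (tl e) (hd e) :=
  Relation.EqvGen.rel _ _ ⟨e, h, Or.inl ⟨rfl, rfl⟩⟩

lemma joined_empty {a b : V} (h : joinedRel tl hd (∅ : Set E) a b) : a = b := by
  induction h with
  | rel x y hxy => obtain ⟨e, he, _⟩ := hxy; exact absurd he (Set.notMem_empty e)
  | refl => rfl
  | symm _ _ _ ih => exact ih.symm
  | trans _ _ _ _ _ ih1 ih2 => exact ih1.trans ih2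

lemma joined_insert {C : Set E} {e : E} {a b : V} :
    joinedRel tl hd (insert e C) a b ↔
      joinedRel tl hd C a b ∨
      (joinedRel tl hd C a (tl e) ∧ joinedRel tl hd C (hd e) b) ∨
      (joinedRel tl hd C a (hd e) ∧ joinedRel tl hd C (tl e) b) := by
  constructor
  · intro h
    induction h with
    | rel x y hxy =>
        obtain ⟨f, hf, hor⟩ := hxy
        rcases hf with hf | hf
        · subst hf
          rcases hor with ⟨h1, h2⟩ | ⟨h1, h2⟩ <;> subst h1 <;> subst h2
          · exact Or.inr (Or.inl ⟨joined_refl _ _, joined_refl _ _⟩)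
          · exact Or.inr (Or.inr ⟨joined_refl _ _, joined_refl _ _⟩)
        · exact Or.inl (Relation.EqvGen.rel _ _ ⟨f, hf, hor⟩)
    | refl x => exact Or.inl (joined_refl _ _)
    | symm x y _ ih =>
        rcases ih with h | ⟨h1, h2⟩ | ⟨h1, h2⟩
        · exact Or.inl (joined_symm h)
        · exact Or.inr (Or.inr ⟨joined_symm h2, joined_symm h1⟩)
        · exact Or.inr (Or.inl ⟨joined_symm h2, joined_symm h1⟩)
    | trans x y z _ _ ih1 ih2 =>
        rcases ih1 with h | ⟨h1, h2⟩ | ⟨h1, h2⟩ <;>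
          rcases ih2 with h' | ⟨h1', h2'⟩ | ⟨h1', h2'⟩
        · exact Or.inl (joined_trans h h')
        · exact Or.inr (Or.inl ⟨joined_trans h h1', h2'⟩)
        · exact Or.inr (Or.inr ⟨joined_trans h h1', h2'⟩)
        · exact Or.inr (Or.inl ⟨h1, joined_trans h2 h'⟩)
        · exact Or.inl (joined_trans h1 (joined_trans (joined_symm (joined_trans h2 h1')) h2'))
        · exact Or.inl (joined_trans h1 h2')
        · exact Or.inr (Or.inr ⟨h1, joined_trans h2 h'⟩)
        · exact Or.inl (joined_trans h1 h2')
        · exact Or.inl (joined_trans h1 (joined_trans (joined_symm (joined_trans h2 h1')) h2'))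
  · rintro (h | ⟨h1, h2⟩ | ⟨h1, h2⟩)
    · exact joined_mono (Set.subset_insert e C) h
    · exact joined_trans (joined_mono (Set.subset_insert e C) h1)
        (joined_trans (joined_edge (Set.mem_insert e C))
          (joined_mono (Set.subset_insert e C) h2))
    · exact joined_trans (joined_mono (Set.subset_insert e C) h1)
        (joined_trans (joined_symm (joined_edge (Set.mem_insert e C)))
          (joined_mono (Set.subset_insert e C) h2))

variable [Fintype V]

def comp (tl hd : E → V) (C : Finset E) (v : V) : Finset V :=
  Finset.univ.filter fun w => joinedRel tl hd (↑C) v w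

lemma mem_comp {C : Finset E} {v w : V} :
    w ∈ comp tl hd C v ↔ joinedRel tl hd (↑C) v w := by
  simp [comp]

lemma comp_eq_iff {C : Finset E} {u v : V} :
    comp tl hd C u = comp tl hd C v ↔ joinedRel tl hd (↑C) u v := by
  constructor
  · intro h
    have : v ∈ comp tl hd C u := h ▸ mem_comp.mpr (joined_refl _ v)
    exact mem_comp.mp this
  · intro h
    ext w
    rw [mem_comp, mem_comp]
    exact ⟨fun hw => joined_trans (joined_symm h) hw, fun hw => joined_trans h hw⟩

def ncomp (tl hd : E → V) (C : Finset E) : ℕ :=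
  (Finset.univ.image (comp tl hd C)).card

lemma ncomp_empty : ncomp tl hd (∅ : Finset E) = Fintype.card V := by
  have h : ∀ v : V, comp tl hd (∅ : Finset E) v = {v} := by
    intro v
    ext w
    rw [mem_comp]
    simp only [Finset.coe_empty, Finset.mem_singleton]
    exact ⟨fun h => (joined_empty h).symm ▸ rfl, fun h => h ▸ joined_refl _ _⟩
  unfold ncomp
  rw [show (comp tl hd (∅ : Finset E)) = (fun v => ({v} : Finset V)) from funext h,
    Finset.card_image_of_injective _ Finset.singleton_injective]
  exact Finset.card_univ

lemma ncomp_eq_one_iff [Nonempty V] {C : Finset E} :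
    ncomp tl hd C = 1 ↔ ∀ a b : V, joinedRel tl hd (↑C) a b := by
  constructor
  · intro h a b
    have hc := Finset.card_le_one.mp h.le
    exact comp_eq_iff.mp (hc _ (Finset.mem_image_of_mem _ (Finset.mem_univ a))
      _ (Finset.mem_image_of_mem _ (Finset.mem_univ b)))
  · intro h
    obtain ⟨v⟩ := ‹Nonempty V›
    apply Finset.card_eq_one.mpr
    refine ⟨comp tl hd C v, ?_⟩
    ext X
    simp only [Finset.mem_image, Finset.mem_singleton]
    constructor
    · rintro ⟨w, -, rfl⟩
      exact comp_eq_iff.mpr (h w v)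
    · rintro rfl
      exact ⟨v, Finset.mem_univ v, rfl⟩

lemma joined_insert_coe [DecidableEq E] {C : Finset E} {e : E} {a b : V} :
    joinedRel tl hd (↑(insert e C)) a b ↔
      joinedRel tl hd (↑C) a b ∨
      (joinedRel tl hd (↑C) a (tl e) ∧ joinedRel tl hd (↑C) (hd e) b) ∨
      (joinedRel tl hd (↑C) a (hd e) ∧ joinedRel tl hd (↑C) (tl e) b) := by
  rw [Finset.coe_insert]
  exact joined_insert

lemma ncomp_insert [DecidableEq E] {C : Finset E} {e : E}
    (h : ¬ joinedRel tl hd (↑C) (tl e) (hd e)) :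
    ncomp tl hd C = ncomp tl hd (insert e C) + 1 := by
  have h1 : ∀ v : V, ¬ joinedRel tl hd (↑C) v (tl e) → ¬ joinedRel tl hd (↑C) v (hd e) →
      comp tl hd (insert e C) v = comp tl hd C v := by
    intro v ht hh
    ext w
    rw [mem_comp, mem_comp, joined_insert_coe]
    constructor
    · rintro (hw | ⟨hw1, hw2⟩ | ⟨hw1, hw2⟩)
      · exact hw
      · exact absurd hw1 ht
      · exact absurd hw1 hh
    · exact Or.inl
  have h2 : ∀ v : V, (joinedRel tl hd (↑C) v (tl e) ∨ joinedRel tl hd (↑C) v (hd e)) →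
      comp tl hd (insert e C) v = comp tl hd C (tl e) ∪ comp tl hd C (hd e) := by
    intro v hv
    ext w
    rw [mem_comp, Finset.mem_union, mem_comp, mem_comp, joined_insert_coe]
    rcases hv with hv | hv
    · constructor
      · rintro (hw | ⟨hw1, hw2⟩ | ⟨hw1, hw2⟩)
        · exact Or.inl (joined_trans (joined_symm hv) hw)
        · exact Or.inr hw2
        · exact Or.inl hw2
      · rintro (hw | hw)
        · exact Or.inl (joined_trans hv hw)
        · exact Or.inr (Or.inl ⟨hv, hw⟩)
    · constructor
      · rintro (hw | ⟨hw1, hw2⟩ | ⟨hw1, hw2⟩)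
        · exact Or.inr (joined_trans (joined_symm hv) hw)
        · exact Or.inr hw2
        · exact Or.inl hw2
      · rintro (hw | hw)
        · exact Or.inr (Or.inr ⟨hv, hw⟩)
        · exact Or.inl (joined_trans hv hw)
  have hab : comp tl hd C (tl e) ≠ comp tl hd C (hd e) := fun hc => h (comp_eq_iff.mp hc)
  have himg : Finset.univ.image (comp tl hd (insert e C)) =
      insert (comp tl hd C (tl e) ∪ comp tl hd C (hd e))
        (((Finset.univ.image (comp tl hd C)).erase (comp tl hd C (tl e))).erase
          (comp tl hd C (hd e))) := by
    ext X
    simp only [Finset.mem_image, Finset.mem_insert, Finset.mem_erase, Finset.mem_univ,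
      true_and]
    constructor
    · rintro ⟨v, rfl⟩
      by_cases hv : joinedRel tl hd (↑C) v (tl e) ∨ joinedRel tl hd (↑C) v (hd e)
      · exact Or.inl (h2 v hv)
      · push_neg at hv
        rw [h1 v hv.1 hv.2]
        refine Or.inr ⟨fun hc => hv.2 (comp_eq_iff.mp hc), fun hc => hv.1 (comp_eq_iff.mp hc),
          v, rfl⟩
    · rintro (hX | ⟨hX2, hX1, v, rfl⟩)
      · exact ⟨tl e, by rw [hX]; exact h2 (tl e) (Or.inl (joined_refl _ _))⟩
      · exact ⟨v, h1 v (fun hc => hX1 (comp_eq_iff.mpr hc)) (fun hc => hX2 (comp_eq_iff.mpr hc))⟩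
  have hnotmem : (comp tl hd C (tl e) ∪ comp tl hd C (hd e)) ∉
      ((Finset.univ.image (comp tl hd C)).erase (comp tl hd C (tl e))).erase
        (comp tl hd C (hd e)) := by
    intro hc
    obtain ⟨hc2, hc1, v, hv⟩ := by
      simpa only [Finset.mem_erase, Finset.mem_image, Finset.mem_univ, true_and] using hc
    have : tl e ∈ comp tl hd C v := by
      rw [hv]
      exact Finset.mem_union_left _ (mem_comp.mpr (joined_refl _ _))
    have hva : comp tl hd C v = comp tl hd C (tl e) := comp_eq_iff.mpr (mem_comp.mp this)
    exact hc1 (hv ▸ hva)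
  have hmema : comp tl hd C (tl e) ∈ Finset.univ.image (comp tl hd C) :=
    Finset.mem_image_of_mem _ (Finset.mem_univ _)
  have hmemb : comp tl hd C (hd e) ∈
      (Finset.univ.image (comp tl hd C)).erase (comp tl hd C (tl e)) :=
    Finset.mem_erase.mpr ⟨fun hc => hab hc.symm, Finset.mem_image_of_mem _ (Finset.mem_univ _)⟩
  have c1 := Finset.card_erase_add_one hmema
  have c2 := Finset.card_erase_add_one hmemb
  unfold ncomp
  rw [himg, Finset.card_insert_of_notMem hnotmem]
  omega

lemma joined_union_loops [DecidableEq E] {C T : Finset E}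
    (hT : ∀ f ∈ T, joinedRel tl hd (↑C) (tl f) (hd f)) {a b : V}
    (h : joinedRel tl hd (↑(T ∪ C)) a b) : joinedRel tl hd (↑C) a b := by
  induction h with
  | rel x y hxy =>
      obtain ⟨f, hf, hor⟩ := hxy
      rw [Finset.coe_union, Set.mem_union] at hf
      have hfj : joinedRel tl hd (↑C) (tl f) (hd f) := by
        rcases hf with hf | hf
        · exact hT f hf
        · exact joined_edge hf
      rcases hor with ⟨h1, h2⟩ | ⟨h1, h2⟩ <;> subst h1 <;> subst h2
      · exact hfj
      · exact joined_symm hfj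
  | refl x => exact joined_refl _ _
  | symm _ _ _ ih => exact joined_symm ih
  | trans _ _ _ _ _ ih1 ih2 => exact joined_trans ih1 ih2

lemma extactAux_congr [LinearOrder E] (tl hd : E → V) :
    ∀ S C T T' : Finset E, (∀ f ∈ S, (f ∈ T ↔ f ∈ T')) →
      extactAux tl hd T S C = extactAux tl hd T' S C := by
  intro S
  induction S using Finset.strongInduction with
  | _ S ih =>
    intro C T T' hTT'
    rw [extactAux, extactAux]
    by_cases hne : (S.filter fun e => ¬ joinedRel tl hd (↑C) (tl e) (hd e)).Nonempty
    · rw [dif_pos hne, dif_pos hne]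
      have heS : (S.filter fun e => ¬ joinedRel tl hd (↑C) (tl e) (hd e)).max' hne ∈ S :=
        Finset.mem_of_mem_filter _ (Finset.max'_mem _ hne)
      have hiff := hTT' _ heS
      have hsub := Finset.erase_ssubset heS
      by_cases heT : (S.filter fun e => ¬ joinedRel tl hd (↑C) (tl e) (hd e)).max' hne ∈ T
      · rw [if_pos heT, if_pos (hiff.mp heT)]
        exact ih _ hsub _ _ _ (fun f hf => hTT' f (Finset.mem_of_mem_erase hf))
      · rw [if_neg heT, if_neg (fun hc => heT (hiff.mpr hc))]
        exact ih _ hsub _ _ _ (fun f hf => hTT' f (Finset.mem_of_mem_erase hf))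
    · rw [dif_neg hne, dif_neg hne]

lemma sum_pow_card {R : Type} [CommRing R] [DecidableEq E] (x : R) (S : Finset E) :
    ∑ D ∈ S.powerset, x ^ D.card = (x + 1) ^ S.card := by
  induction S using Finset.induction with
  | empty => simp
  | insert _ _ ha ih =>
    rename_i a s
    rw [Finset.sum_powerset_insert ha, Finset.card_insert_of_notMem ha, pow_succ]
    have : ∑ t ∈ s.powerset, x ^ (insert a t).card = ∑ t ∈ s.powerset, x * x ^ t.card := by
      apply Finset.sum_congr rfl
      intro t ht
      rw [Finset.card_insert_of_notMem (fun hc => ha (Finset.mem_powerset.mp ht hc)),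
        pow_succ]
      ring
    rw [this, ← Finset.mul_sum, ih]
    ring

lemma sum_split {M : Type} [AddCommMonoid M] [DecidableEq E] (S : Finset E) (e : E)
    (heS : e ∈ S) (p : Finset E → Prop) [DecidablePred p] (f : Finset E → M) :
    ∑ T ∈ S.powerset.filter p, f T
      = (∑ T ∈ (S.erase e).powerset.filter (fun T => p (insert e T)), f (insert e T))
        + ∑ T ∈ (S.erase e).powerset.filter p, f T := by
  rw [← Finset.sum_filter_add_sum_filter_not (S.powerset.filter p) (fun T => e ∈ T)]
  congr 1
  · refine Finset.sum_bij' (fun T _ => T.erase e) (fun T _ => insert e T) ?_ ?_ ?_ ?_ ?_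
    · intro T hT
      simp only [Finset.mem_filter, Finset.mem_powerset] at hT ⊢
      obtain ⟨⟨hT1, hT2⟩, hT3⟩ := hT
      exact ⟨Finset.erase_subset_erase _ hT1, by rw [Finset.insert_erase hT3]; exact hT2⟩
    · intro T hT
      simp only [Finset.mem_filter, Finset.mem_powerset, Finset.subset_erase] at hT ⊢
      obtain ⟨⟨hT1, hT2⟩, hT3⟩ := hT
      exact ⟨⟨Finset.insert_subset heS hT1, hT3⟩, Finset.mem_insert_self _ _⟩
    · intro T hT
      simp only [Finset.mem_filter] at hT
      exact Finset.insert_erase hT.2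
    · intro T hT
      simp only [Finset.mem_filter, Finset.mem_powerset, Finset.subset_erase] at hT
      exact Finset.erase_insert hT.1.2
    · intro T hT
      simp only [Finset.mem_filter] at hT
      show f T = f (insert e (T.erase e))
      rw [Finset.insert_erase hT.2]
  · apply Finset.sum_congr ?_ (fun _ _ => rfl)
    ext T
    simp only [Finset.mem_filter, Finset.mem_powerset, Finset.subset_erase]
    tauto

lemma main_lemma [Nonempty V] [LinearOrder E] (tl hd : E → V) :
    ∀ S C : Finset E,
      (∑ T ∈ S.powerset.filter (fun T =>
          (∀ a b, joinedRel tl hd (↑(T ∪ C)) a b) ∧ T.card + 1 = ncomp tl hd C),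
        (Polynomial.X : Polynomial ℤ) ^ extactAux tl hd T S C)
      = ∑ D ∈ S.powerset.filter (fun D => ∀ a b, joinedRel tl hd (↑(D ∪ C)) a b),
          ((Polynomial.X : Polynomial ℤ) - 1) ^ (D.card + 1 - ncomp tl hd C) := by
  intro S
  induction S using Finset.strongInduction with
  | _ S ih =>
    intro C
    by_cases hne : (S.filter fun e => ¬ joinedRel tl hd (↑C) (tl e) (hd e)).Nonempty
    · -- inductive case
      obtain ⟨e, he⟩ : ∃ x, x = (S.filter fun e =>
          ¬ joinedRel tl hd (↑C) (tl e) (hd e)).max' hne := ⟨_, rfl⟩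
      have hmem := Finset.max'_mem _ hne
      rw [Finset.mem_filter, ← he] at hmem
      obtain ⟨heS, heloop⟩ := hmem
      have hnc : ncomp tl hd C = ncomp tl hd (insert e C) + 1 := ncomp_insert heloop
      have hsub := Finset.erase_ssubset heS
      have hext : ∀ T : Finset E, extactAux tl hd T S C =
          if e ∈ T then extactAux tl hd T (S.erase e) (insert e C)
          else extactAux tl hd T (S.erase e) C := by
        intro T
        rw [extactAux, dif_pos hne, he]
      have hins : ∀ T : Finset E, e ∉ T → insert e T ∪ C = T ∪ insert e C := by
        intro T _
        rw [Finset.insert_union, Finset.union_insert]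
      refine ((sum_split S e heS _
          (fun T => (Polynomial.X : Polynomial ℤ) ^ extactAux tl hd T S C)).trans ?_).trans
        (sum_split S e heS _ (fun D => ((Polynomial.X : Polynomial ℤ) - 1)
          ^ (D.card + 1 - ncomp tl hd C))).symm
      congr 1
      · -- contraction part
        have h1 : ∀ T ∈ (S.erase e).powerset.filter (fun T =>
              (∀ a b, joinedRel tl hd (↑(insert e T ∪ C)) a b) ∧
                (insert e T).card + 1 = ncomp tl hd C),
            (Polynomial.X : Polynomial ℤ) ^ extactAux tl hd (insert e T) S C
              = (Polynomial.X : Polynomial ℤ) ^ extactAux tl hd T (S.erase e) (insert e C) := by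
          intro T hT
          have heT : e ∉ T := fun hc =>
            Finset.notMem_erase e S (Finset.mem_powerset.mp (Finset.mem_filter.mp hT).1 hc)
          rw [hext, if_pos (Finset.mem_insert_self e T)]
          congr 1
          apply extactAux_congr
          intro f hf
          have : f ≠ e := Finset.ne_of_mem_erase hf
          simp [Finset.mem_insert, this]
        rw [Finset.sum_congr rfl h1]
        have h2 : ∀ T ∈ (S.erase e).powerset, ((∀ a b, joinedRel tl hd (↑(insert e T ∪ C)) a b) ∧
              (insert e T).card + 1 = ncomp tl hd C) ↔
            ((∀ a b, joinedRel tl hd (↑(T ∪ insert e C)) a b) ∧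
              T.card + 1 = ncomp tl hd (insert e C)) := by
          intro T hT
          have heT : e ∉ T := fun hc =>
            Finset.notMem_erase e S (Finset.mem_powerset.mp hT hc)
          rw [hins T heT, Finset.card_insert_of_notMem heT]
          constructor
          · rintro ⟨hc, hcard⟩; exact ⟨hc, by omega⟩
          · rintro ⟨hc, hcard⟩; exact ⟨hc, by omega⟩
        rw [Finset.filter_congr h2, ih _ hsub (insert e C)]
        apply Finset.sum_congr
        · apply Finset.filter_congr
          intro T hT
          have heT : e ∉ T := fun hc =>
            Finset.notMem_erase e S (Finset.mem_powerset.mp hT hc)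
          rw [hins T heT]
        · intro D hD
          have heD : e ∉ D := fun hc =>
            Finset.notMem_erase e S (Finset.mem_powerset.mp (Finset.mem_filter.mp hD).1 hc)
          rw [Finset.card_insert_of_notMem heD, hnc, Nat.succ_sub_succ]
      · -- deletion part
        have h1 : ∀ T ∈ (S.erase e).powerset.filter (fun T =>
              (∀ a b, joinedRel tl hd (↑(T ∪ C)) a b) ∧ T.card + 1 = ncomp tl hd C),
            (Polynomial.X : Polynomial ℤ) ^ extactAux tl hd T S C
              = (Polynomial.X : Polynomial ℤ) ^ extactAux tl hd T (S.erase e) C := by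
          intro T hT
          have heT : e ∉ T := fun hc =>
            Finset.notMem_erase e S (Finset.mem_powerset.mp (Finset.mem_filter.mp hT).1 hc)
          rw [hext, if_neg heT]
        rw [Finset.sum_congr rfl h1, ih _ hsub C]
    · -- base case
      have hloops : ∀ f ∈ S, joinedRel tl hd (↑C) (tl f) (hd f) := by
        intro f hf
        by_contra hc
        exact hne ⟨f, Finset.mem_filter.mpr ⟨hf, hc⟩⟩
      have hext : ∀ T : Finset E, extactAux tl hd T S C = S.card := by
        intro T; rw [extactAux, dif_neg hne]
      by_cases hconn : ncomp tl hd C = 1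
      · have hCconn : ∀ a b : V, joinedRel tl hd (↑C) a b := ncomp_eq_one_iff.mp hconn
        have hfL : S.powerset.filter (fun T =>
            (∀ a b, joinedRel tl hd (↑(T ∪ C)) a b) ∧ T.card + 1 = ncomp tl hd C) = {∅} := by
          ext T
          simp only [Finset.mem_filter, Finset.mem_powerset, Finset.mem_singleton]
          constructor
          · rintro ⟨hT, -, hcard⟩
            rw [hconn] at hcard
            exact Finset.card_eq_zero.mp (by omega)
          · rintro rfl
            exact ⟨Finset.empty_subset _,
              fun a b => by rw [Finset.empty_union]; exact hCconn a b,
              by rw [hconn, Finset.card_empty]⟩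
        have hfR : S.powerset.filter (fun D => ∀ a b, joinedRel tl hd (↑(D ∪ C)) a b)
            = S.powerset := by
          apply Finset.filter_true_of_mem
          intro D _ a b
          exact joined_mono (Finset.coe_subset.mpr Finset.subset_union_right) (hCconn a b)
        rw [hfL, hfR, Finset.sum_singleton, hext]
        have h3 : ∀ D ∈ S.powerset, ((Polynomial.X : Polynomial ℤ) - 1)
            ^ (D.card + 1 - ncomp tl hd C)
            = ((Polynomial.X : Polynomial ℤ) - 1) ^ D.card := by
          intro D _
          rw [hconn, Nat.add_sub_cancel]
        rw [Finset.sum_congr rfl h3, sum_pow_card, sub_add_cancel]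
      · have hkey : ∀ T ∈ S.powerset, ¬ (∀ a b, joinedRel tl hd (↑(T ∪ C)) a b) := by
          intro T hT hc
          exact hconn (ncomp_eq_one_iff.mpr (fun a b =>
            joined_union_loops (fun f hf => hloops f (Finset.mem_powerset.mp hT hf)) (hc a b)))
        rw [Finset.filter_false_of_mem (fun T hT hc => hkey T hT hc.1),
          Finset.filter_false_of_mem hkey, Finset.sum_empty, Finset.sum_empty]

end Stmt4

/-- in `ℤ[X]`, `Σ_{spanning trees T} X ^ extact(Q,T)
= Σ_{D ⊆ E connected} (X − 1) ^ (#D − #V + 1)`; in particular the left-hand side does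
not depend on the chosen linear order on the edges. -/
theorem statement4 {V E : Type} [Fintype V] [Nonempty V] [Fintype E] [LinearOrder E]
    (tl hd : E → V) (hQ : IsConn tl hd Set.univ) :
    (∑ T ∈ Finset.univ.filter fun T : Finset E => IsSpanningTree tl hd T,
        (Polynomial.X : Polynomial ℤ) ^ extact tl hd T
      = ∑ D ∈ Finset.univ.filter fun D : Finset E => IsConn tl hd ↑D,
          ((Polynomial.X : Polynomial ℤ) - 1) ^ (D.card + 1 - Fintype.card V)) ∧
    ∀ r : LinearOrder E,
      ∑ T ∈ Finset.univ.filter fun T : Finset E => IsSpanningTree tl hd T,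
          (Polynomial.X : Polynomial ℤ) ^ (@extact V E _ r tl hd T)
        = ∑ T ∈ Finset.univ.filter fun T : Finset E => IsSpanningTree tl hd T,
            (Polynomial.X : Polynomial ℤ) ^ extact tl hd T := by
  have key : ∀ (r : LinearOrder E),
      (∑ T ∈ Finset.univ.filter fun T : Finset E => IsSpanningTree tl hd T,
        (Polynomial.X : Polynomial ℤ) ^ (@extact V E _ r tl hd T))
      = ∑ D ∈ Finset.univ.filter fun D : Finset E => IsConn tl hd ↑D,
          ((Polynomial.X : Polynomial ℤ) - 1) ^ (D.card + 1 - Fintype.card V) := by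
    intro r
    letI := r
    have h := Stmt4.main_lemma tl hd (Finset.univ : Finset E) ∅
    rw [Finset.powerset_univ] at h
    simp only [Finset.union_empty, Stmt4.ncomp_empty] at h
    refine Eq.trans ?_ (h.trans ?_)
    · refine Finset.sum_congr (Finset.filter_congr (fun T _ => Iff.rfl)) (fun T _ => rfl)
    · refine Finset.sum_congr (Finset.filter_congr (fun D _ => Iff.rfl)) (fun D _ => rfl)
  exact ⟨key _, fun r => (key r).trans (key _).symm⟩

end
end

section
/- Let Q be a connected quiver, k a field, λ : V → k with Σ_{i∈V} λ_i = 0, and (x, x*) a toric representation of the double quiver of Q. Let e₀ be a non-loop edge with x_{e₀} ≠ 0 or x*_{e₀} ≠ 0. If (x, x*) satisfies the moment map equations for λ on Q, then the restriction of (x, x*) to E ∖ {e₀} satisfies the moment map equations for λ/e₀ on the contracted quiver Q/e₀. -/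
open Classical Finset

noncomputable section

lemma sum_subtype_filter' {E k : Type} [Fintype E] [DecidableEq E] [AddCommMonoid k]
    (e₀ : E) (Q : E → Prop) [DecidablePred Q] (g : E → k) :
    ∑ f ∈ (univ : Finset {f : E // f ≠ e₀}).filter (fun f => Q f.1), g f.1
      = ∑ f ∈ (univ : Finset E).filter (fun f => f ≠ e₀ ∧ Q f), g f := by
  rw [show ((univ : Finset E).filter fun f => f ≠ e₀ ∧ Q f)
      = ((univ : Finset E).filter (fun f => f ≠ e₀)).filter (fun f => Q f) by
    rw [Finset.filter_filter]]
  rw [Finset.sum_filter, Finset.sum_filter,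
    Finset.sum_subtype (p := fun f : E => f ≠ e₀) (univ.filter (fun f => f ≠ e₀))
      (by simp) (fun f => if Q f then g f else 0)]


/-- the moment map equations are preserved by contraction of a non-loop
edge `e₀` with `x e₀ ≠ 0` or `xs e₀ ≠ 0`. -/
theorem statement5 {V E : Type} [Fintype V] [Nonempty V] [Fintype E]
    [DecidableEq V] [DecidableEq E]
    (tl hd : E → V) (hQ : IsConn tl hd Set.univ)
    (k : Type) [Field k] (lam : V → k) (hlam : ∑ i, lam i = 0)
    (x xs : E → k) (e₀ : E) (hloop : hd e₀ ≠ tl e₀)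
    (hnz : x e₀ ≠ 0 ∨ xs e₀ ≠ 0)
    (hmm : MomentMap tl hd lam x xs) :
    MomentMap (contractTl tl hd e₀ hloop) (contractHd tl hd e₀ hloop)
      (contractParam (tl e₀) (hd e₀) lam)
      (fun f => x f.1) (fun f => xs f.1) := by
  have hmm' : ∀ v : V,
      (∑ e ∈ (univ : Finset E).filter fun e => hd e = v, x e * xs e) -
        (∑ e ∈ (univ : Finset E).filter fun e => tl e = v, x e * xs e) = lam v := by
    intro v
    have := hmm v
    convert this using 3 <;> (ext f; simp)
  intro i
  have hcH : ∀ f : {f : E // f ≠ e₀},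
      (contractHd tl hd e₀ hloop f = i) ↔ (if hd f.1 = tl e₀ then hd e₀ else hd f.1) = i.1 := by
    intro f
    rw [Subtype.ext_iff]
    unfold contractHd cProj
    split <;> simp_all
  have hcT : ∀ f : {f : E // f ≠ e₀},
      (contractTl tl hd e₀ hloop f = i) ↔ (if tl f.1 = tl e₀ then hd e₀ else tl f.1) = i.1 := by
    intro f
    rw [Subtype.ext_iff]
    unfold contractTl cProj
    split <;> simp_all
  have main : (∑ f ∈ (univ : Finset {f : E // f ≠ e₀}).filter
        (fun f => contractHd tl hd e₀ hloop f = i), x f.1 * xs f.1)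
      - (∑ f ∈ (univ : Finset {f : E // f ≠ e₀}).filter
        (fun f => contractTl tl hd e₀ hloop f = i), x f.1 * xs f.1)
      = contractParam (tl e₀) (hd e₀) lam i := by
    by_cases hi : i.1 = hd e₀
    · -- merged vertex
      have hfH : ((univ : Finset {f : E // f ≠ e₀}).filter
            (fun f => contractHd tl hd e₀ hloop f = i))
          = (univ.filter (fun f => hd f.1 = tl e₀ ∨ hd f.1 = hd e₀)) := by
        apply Finset.filter_congr
        intro f _
        rw [hcH f, hi]
        constructor
        · intro h
          by_cases hfa : hd f.1 = tl e₀
          · exact Or.inl hfa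
          · right; simpa [hfa] using h
        · rintro (h | h) <;> simp [h, hloop.symm]
      have hfT : ((univ : Finset {f : E // f ≠ e₀}).filter
            (fun f => contractTl tl hd e₀ hloop f = i))
          = (univ.filter (fun f => tl f.1 = tl e₀ ∨ tl f.1 = hd e₀)) := by
        apply Finset.filter_congr
        intro f _
        rw [hcT f, hi]
        constructor
        · intro h
          by_cases hfa : tl f.1 = tl e₀
          · exact Or.inl hfa
          · right; simpa [hfa] using h
        · rintro (h | h) <;> simp [h, hloop.symm]
      rw [hfH, hfT, sum_subtype_filter' e₀ (fun f => hd f = tl e₀ ∨ hd f = hd e₀) (fun f => x f * xs f),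
        sum_subtype_filter' e₀ (fun f => tl f = tl e₀ ∨ tl f = hd e₀) (fun f => x f * xs f)]
      have hsplitH : ((univ : Finset E).filter fun f => f ≠ e₀ ∧ (hd f = tl e₀ ∨ hd f = hd e₀))
          = (univ.filter fun f => hd f = tl e₀) ∪
            ((univ.filter fun f => hd f = hd e₀).erase e₀) := by
        ext f
        simp only [Finset.mem_filter, Finset.mem_union, Finset.mem_erase, Finset.mem_univ,
          true_and]
        constructor
        · rintro ⟨hne, h | h⟩
          · exact Or.inl h
          · exact Or.inr ⟨hne, h⟩
        · rintro (h | ⟨hne, h⟩)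
          · refine ⟨fun hf => ?_, Or.inl h⟩
            rw [hf] at h; exact hloop h
          · exact ⟨hne, Or.inr h⟩
      have hsplitT : ((univ : Finset E).filter fun f => f ≠ e₀ ∧ (tl f = tl e₀ ∨ tl f = hd e₀))
          = ((univ.filter fun f => tl f = tl e₀).erase e₀) ∪
            (univ.filter fun f => tl f = hd e₀) := by
        ext f
        simp only [Finset.mem_filter, Finset.mem_union, Finset.mem_erase, Finset.mem_univ,
          true_and]
        constructor
        · rintro ⟨hne, h | h⟩
          · exact Or.inl ⟨hne, h⟩
          · exact Or.inr h
        · rintro (⟨hne, h⟩ | h)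
          · exact ⟨hne, Or.inl h⟩
          · refine ⟨fun hf => ?_, Or.inr h⟩
            rw [hf] at h; exact hloop h.symm
      have hdisjH : Disjoint (univ.filter fun f : E => hd f = tl e₀)
          ((univ.filter fun f : E => hd f = hd e₀).erase e₀) := by
        apply Finset.disjoint_left.2
        intro f hf hf2
        have h1 := (Finset.mem_filter.1 hf).2
        have h2 := (Finset.mem_filter.1 (Finset.mem_of_mem_erase hf2)).2
        exact hloop (by rw [← h1, h2])
      have hdisjT : Disjoint ((univ.filter fun f : E => tl f = tl e₀).erase e₀)
          (univ.filter fun f : E => tl f = hd e₀) := by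
        apply Finset.disjoint_left.2
        intro f hf hf2
        have h1 := (Finset.mem_filter.1 (Finset.mem_of_mem_erase hf)).2
        have h2 := (Finset.mem_filter.1 hf2).2
        exact hloop (by rw [← h2, h1])
      rw [hsplitH, hsplitT, Finset.sum_union hdisjH, Finset.sum_union hdisjT,
        Finset.sum_erase_eq_sub (by simp : e₀ ∈ univ.filter fun f : E => hd f = hd e₀),
        Finset.sum_erase_eq_sub (by simp : e₀ ∈ univ.filter fun f : E => tl f = tl e₀)]
      simp only [contractParam, hi, if_pos]
      linear_combination hmm' (tl e₀) + hmm' (hd e₀)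
    · -- other vertices
      have hia : i.1 ≠ tl e₀ := i.2
      have hfH : ((univ : Finset {f : E // f ≠ e₀}).filter
            (fun f => contractHd tl hd e₀ hloop f = i))
          = (univ.filter (fun f => hd f.1 = i.1)) := by
        apply Finset.filter_congr
        intro f _
        rw [hcH f]
        constructor
        · intro h
          by_cases hfa : hd f.1 = tl e₀
          · simp only [hfa, if_pos] at h; exact absurd h.symm hi
          · simpa [hfa] using h
        · intro h; simp [h, hia]
      have hfT : ((univ : Finset {f : E // f ≠ e₀}).filter
            (fun f => contractTl tl hd e₀ hloop f = i))
          = (univ.filter (fun f => tl f.1 = i.1)) := by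
        apply Finset.filter_congr
        intro f _
        rw [hcT f]
        constructor
        · intro h
          by_cases hfa : tl f.1 = tl e₀
          · simp only [hfa, if_pos] at h; exact absurd h.symm hi
          · simpa [hfa] using h
        · intro h; simp [h, hia]
      rw [hfH, hfT, sum_subtype_filter' e₀ (fun f => hd f = i.1) (fun f => x f * xs f),
        sum_subtype_filter' e₀ (fun f => tl f = i.1) (fun f => x f * xs f)]
      have h1 : ((univ : Finset E).filter fun f => f ≠ e₀ ∧ hd f = i.1)
          = (univ.filter fun f => hd f = i.1) := by
        apply Finset.filter_congr
        intro f _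
        constructor
        · exact fun h => h.2
        · intro h
          refine ⟨fun hf => hi ?_, h⟩
          rw [hf] at h; exact h.symm
      have h2 : ((univ : Finset E).filter fun f => f ≠ e₀ ∧ tl f = i.1)
          = (univ.filter fun f => tl f = i.1) := by
        apply Finset.filter_congr
        intro f _
        constructor
        · exact fun h => h.2
        · intro h
          refine ⟨fun hf => hia ?_, h⟩
          rw [hf] at h; exact h.symm
      rw [h1, h2]
      simp only [contractParam, hi, if_neg]
      exact hmm' i.1
  convert main using 3 <;> (ext f; simp)


end
end

section
/- Let Q be a connected quiver, k a field, θ : V → ℝ with Σ_{i∈V} θ_i = 0, and (x, x*) a toric representation of the double quiver of Q. Let e₀ be a non-loop edge with x_{e₀} ≠ 0 or x*_{e₀} ≠ 0. If (x, x*) is θ-stable on Q, then the restriction of (x, x*) to E ∖ {e₀} is θ/e₀-stable on the contracted quiver Q/e₀. -/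
open Classical Finset

noncomputable section

/-- `θ`-stability is preserved by contraction of a non-loop edge `e₀` with
`x e₀ ≠ 0` or `xs e₀ ≠ 0`. -/
theorem statement6 {V E : Type} [Fintype V] [Nonempty V] [Fintype E]
    [DecidableEq V] [DecidableEq E]
    (tl hd : E → V) (hQ : IsConn tl hd Set.univ)
    (k : Type) [Field k] (θ : V → ℝ) (hθ : ∑ i, θ i = 0)
    (x xs : E → k) (e₀ : E) (hloop : hd e₀ ≠ tl e₀)
    (hnz : x e₀ ≠ 0 ∨ xs e₀ ≠ 0)
    (hstab : StableSub tl hd θ x xs Finset.univ Set.univ) :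
    StableSub (contractTl tl hd e₀ hloop) (contractHd tl hd e₀ hloop)
      (contractParam (tl e₀) (hd e₀) θ)
      (fun f => x f.1) (fun f => xs f.1) Finset.univ Set.univ := by
  intro J _ hclosed hne hneq
  classical
  let hdv : {j : V // j ≠ tl e₀} := ⟨hd e₀, hloop⟩
  set J' : Finset V := Finset.univ.filter (fun v => cProj (tl e₀) (hd e₀) hloop v ∈ J) with hJ'
  have hmem : ∀ v : V, v ∈ J' ↔ cProj (tl e₀) (hd e₀) hloop v ∈ J := by
    intro v; simp [hJ']
  have hproj_a : cProj (tl e₀) (hd e₀) hloop (tl e₀) = hdv := by simp [cProj, hdv]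
  have hproj_ne : ∀ (v : V) (hv : v ≠ (tl e₀)), cProj (tl e₀) (hd e₀) hloop v = ⟨v, hv⟩ := by
    intro v hv; simp [cProj, hv]
  have hproj_sub : ∀ j : {v : V // v ≠ (tl e₀)}, cProj (tl e₀) (hd e₀) hloop (j : V) = j := by
    intro j; rw [hproj_ne (j : V) j.2]
  have hmemA : (tl e₀) ∈ J' ↔ hdv ∈ J := by rw [hmem, hproj_a]
  have hmemB : (hd e₀) ∈ J' ↔ hdv ∈ J := by rw [hmem, hproj_ne (hd e₀) hloop]
  -- J' is closed for the original representation
  have hJ'closed : ClosedOn tl hd x xs Set.univ J' := by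
    intro f _
    by_cases hf : f = e₀
    · subst hf
      constructor
      · intro _ htf
        exact hmemB.2 (hmemA.1 htf)
      · intro _ hhf
        exact hmemA.2 (hmemB.1 hhf)
    · have h := hclosed ⟨f, hf⟩ (Set.mem_univ _)
      constructor
      · intro hxf htf
        rw [hmem] at htf ⊢
        exact h.1 hxf htf
      · intro hxf hhf
        rw [hmem] at hhf ⊢
        exact h.2 hxf hhf
  -- J' is nonempty
  have hne' : J'.Nonempty := by
    obtain ⟨j, hj⟩ := hne
    exact ⟨(j : V), (hmem _).2 (by rw [hproj_sub j]; exact hj)⟩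
  -- J' ≠ univ
  have hneq' : J' ≠ Finset.univ := by
    intro h
    apply hneq
    ext j
    simp only [Finset.mem_univ, iff_true]
    have := (hmem (j : V)).1 (h ▸ Finset.mem_univ _)
    rwa [hproj_sub j] at this
  have hpos := hstab J' (Finset.subset_univ _) hJ'closed hne' hneq'
  -- compare the sums
  have hRHS : ∑ j ∈ J, contractParam (tl e₀) (hd e₀) θ j
      = (∑ j ∈ J, θ (j : V)) + (if hdv ∈ J then θ (tl e₀) else 0) := by
    have : ∀ j ∈ J, contractParam (tl e₀) (hd e₀) θ j = θ (j : V) + (if j = hdv then θ (tl e₀) else 0) := by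
      intro j _
      by_cases h : (j : V) = (hd e₀)
      · have hjι : j = hdv := Subtype.ext h
        simp [contractParam, h, hjι, hdv, add_comm]
      · have hjι : j ≠ hdv := fun hc => h (by rw [hc])
        simp [contractParam, h, hjι]
    rw [Finset.sum_congr rfl this, Finset.sum_add_distrib, Finset.sum_ite_eq' J hdv fun _ => θ (tl e₀)]
  have hval_inj : ∀ j₁ ∈ J, ∀ j₂ ∈ J,
      (Subtype.val j₁ : V) = Subtype.val j₂ → j₁ = j₂ := by
    intro j₁ _ j₂ _ h; exact Subtype.ext h
  have hanotim : (tl e₀) ∉ J.image Subtype.val := by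
    simp only [Finset.mem_image, not_exists]
    rintro j ⟨_, hj⟩
    exact j.2 hj
  have hLHS : ∑ i ∈ J', θ i
      = (∑ j ∈ J, θ (j : V)) + (if hdv ∈ J then θ (tl e₀) else 0) := by
    by_cases hιJ : hdv ∈ J
    · have hJ'eq : J' = insert (tl e₀) (J.image Subtype.val) := by
        ext v
        rw [hmem]
        by_cases hv : v = (tl e₀)
        · subst hv; simp [hproj_a, hιJ]
        · rw [hproj_ne v hv]
          simp only [Finset.mem_insert, hv, false_or, Finset.mem_image]
          constructor
          · intro h; exact ⟨⟨v, hv⟩, h, rfl⟩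
          · rintro ⟨j, hj, rfl⟩
            rwa [show (⟨(j : V), hv⟩ : {i : V // i ≠ (tl e₀)}) = j from Subtype.ext rfl]
      rw [hJ'eq, Finset.sum_insert hanotim, Finset.sum_image hval_inj, if_pos hιJ,
        add_comm]
    · have hJ'eq : J' = J.image Subtype.val := by
        ext v
        rw [hmem]
        by_cases hv : v = (tl e₀)
        · subst hv
          simp [hproj_a, hιJ, hanotim]
        · rw [hproj_ne v hv]
          simp only [Finset.mem_image]
          constructor
          · intro h; exact ⟨⟨v, hv⟩, h, rfl⟩
          · rintro ⟨j, hj, rfl⟩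
            rwa [show (⟨(j : V), hv⟩ : {i : V // i ≠ (tl e₀)}) = j from Subtype.ext rfl]
      rw [hJ'eq, Finset.sum_image hval_inj, if_neg hιJ, add_zero]
  calc (0 : ℝ) < ∑ i ∈ J', θ i := hpos
    _ = ∑ j ∈ J, contractParam (tl e₀) (hd e₀) θ j := by rw [hLHS, hRHS]

end
end

section
/- Let Q be a connected quiver, k a field, θ : V → ℝ with Σ_{i∈V} θ_i = 0, and (x, x*) a toric representation of the double quiver of Q. If (x, x*) is θ-stable, then its inversion graph (V, {e ∈ E : x_e ≠ 0 or x*_e ≠ 0}) is connected. -/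
open Classical Finset

noncomputable section

/-- if `(x, xs)` is `θ`-stable then its inversion graph is connected. -/
theorem statement7 {V E : Type} [Fintype V] [Nonempty V] [Fintype E]
    (tl hd : E → V) (hQ : IsConn tl hd Set.univ)
    (k : Type) [Field k] (θ : V → ℝ) (hθ : ∑ i, θ i = 0)
    (x xs : E → k)
    (hstab : StableSub tl hd θ x xs Finset.univ Set.univ) :
    IsConn tl hd {e | x e ≠ 0 ∨ xs e ≠ 0} := by
  by_contra hconn
  simp only [IsConn, not_forall] at hconn
  obtain ⟨a, b, hab⟩ := hconn
  set D : Set E := {e | x e ≠ 0 ∨ xs e ≠ 0} with hD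
  set J : Finset V := Finset.univ.filter (fun j => joinedRel tl hd D a j) with hJ
  have memJ : ∀ j, j ∈ J ↔ joinedRel tl hd D a j := by
    intro j; simp [hJ]
  have haJ : a ∈ J := (memJ a).2 (Relation.EqvGen.refl a)
  have hbJ : b ∉ J := fun h => hab ((memJ b).1 h)
  have key : ∀ e : E, (x e ≠ 0 ∨ xs e ≠ 0) → (tl e ∈ J ↔ hd e ∈ J) := by
    intro e he
    have hbase : joinedRel tl hd D (tl e) (hd e) :=
      Relation.EqvGen.rel _ _ ⟨e, he, Or.inl ⟨rfl, rfl⟩⟩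
    constructor
    · intro h
      exact (memJ _).2 (Relation.EqvGen.trans _ _ _ ((memJ _).1 h) hbase)
    · intro h
      exact (memJ _).2 (Relation.EqvGen.trans _ _ _ ((memJ _).1 h)
        (Relation.EqvGen.symm _ _ hbase))
  have hclosed : ClosedOn tl hd x xs Set.univ J := by
    intro e _
    exact ⟨fun hx h => (key e (Or.inl hx)).1 h, fun hx h => (key e (Or.inr hx)).2 h⟩
  have hclosedC : ClosedOn tl hd x xs Set.univ Jᶜ := by
    intro e _
    constructor
    · intro hx h
      simp only [Finset.mem_compl] at h ⊢
      exact fun hc => h ((key e (Or.inl hx)).2 hc)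
    · intro hx h
      simp only [Finset.mem_compl] at h ⊢
      exact fun hc => h ((key e (Or.inr hx)).1 hc)
  have h1 : 0 < ∑ i ∈ J, θ i :=
    hstab J (Finset.subset_univ _) hclosed ⟨a, haJ⟩
      (fun h => hbJ (h ▸ Finset.mem_univ b))
  have h2 : 0 < ∑ i ∈ Jᶜ, θ i :=
    hstab Jᶜ (Finset.subset_univ _) hclosedC ⟨b, Finset.mem_compl.2 hbJ⟩
      (fun h => (Finset.mem_compl.1 (h ▸ Finset.mem_univ a)) haJ)
  have hsum : ∑ i ∈ J, θ i + ∑ i ∈ Jᶜ, θ i = 0 := by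
    rw [Finset.sum_add_sum_compl]; exact hθ
  linarith

end
end
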